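/- arXiv:2505.09275 — 8 statements merged into one kernel-verified Lean document; each statement's English description precedes it below -/
import Mathlib

section
/- For every positive integer n and indeterminates x_1,...,x_n, the sum over j from 1 to n of ((1+x_j)/x_j) * ∏_{p≠j} (1 - x_j x_p)/(x_j - x_p), plus (-1)^n ∏_{k=1}^n 1/x_k, equals 1. -/
open Polynomial Finset

open Polynomial Finset

theorem core {K : Type*} [Field K] [DecidableEq K] (s : Finset K) (hx : ∀ a ∈ s, a ≠ 0)
    (h1 : ∀ a ∈ s, a ≠ 1) :
    (∑ a ∈ s, ((1 + a) / a) * ∏ b ∈ s.erase a, (1 - a * b) / (a - b))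
      + (-1 : K) ^ s.card * ∏ a ∈ s, a⁻¹ = 1 := by
  set m := s.card with hm
  set N : K[X] := ∏ a ∈ s, (1 - C a * X) with hN
  set D : K[X] := ∏ a ∈ s, (X - C a) with hD
  set A : K → K := fun a => ((1 + a) / a) * ∏ b ∈ s.erase a, (1 - a * b) / (a - b) with hA
  set R0 : K := (-1 : K) ^ m * ∏ a ∈ s, a⁻¹ with hR0
  set P : K[X] := C R0 * ((1 - X) * D) + X * D
      + (∑ a ∈ s, C (A a) * (X * ((1 - X) * ∏ b ∈ s.erase a, (X - C b)))) - N with hP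
  have hDmonic : D.Monic := monic_prod_of_monic _ _ fun a _ => monic_X_sub_C a
  have hDdeg : D.natDegree = m := by
    rw [hD, natDegree_prod _ _ fun a _ => X_sub_C_ne_zero a]
    simp [hm]
  have hDjmonic : ∀ a ∈ s, (∏ b ∈ s.erase a, (X - C b)).Monic :=
    fun a _ => monic_prod_of_monic _ _ fun b _ => monic_X_sub_C b
  have hDjdeg : ∀ a ∈ s, (∏ b ∈ s.erase a, (X - C b)).natDegree = m - 1 := by
    intro a ha
    rw [natDegree_prod _ _ fun b _ => X_sub_C_ne_zero b]
    simp [card_erase_of_mem ha, hm]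
  have hNdeg : N.natDegree ≤ m := by
    refine le_trans (natDegree_prod_le _ _) ?_
    calc ∑ a ∈ s, (1 - C a * X).natDegree ≤ ∑ a ∈ s, 1 := by
          refine Finset.sum_le_sum fun a _ => ?_
          refine le_trans (natDegree_sub_le _ _) (max_le (by simp) ?_)
          exact le_trans (natDegree_mul_le) (by simp)
      _ = m := by simp [hm]
  have h1X : (1 - X : K[X]).natDegree ≤ 1 :=
    le_trans (natDegree_sub_le _ _) (by simp)
  -- P = 0
  have hPzero : P = 0 := by
    apply eq_zero_of_natDegree_lt_card_of_eval_eq_zero' P (insert 0 (insert 1 s))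
    · intro v hv
      simp only [mem_insert] at hv
      have evN : ∀ t : K, N.eval t = ∏ a ∈ s, (1 - a * t) := by
        intro t; simp [hN, eval_prod]
      have evD : ∀ t : K, D.eval t = ∏ a ∈ s, (t - a) := by
        intro t; simp [hD, eval_prod]
      rcases hv with rfl | rfl | hv
      · -- eval at 0
        have hz : (∑ a ∈ s, C (A a) * (X * ((1 - X) * ∏ b ∈ s.erase a, (X - C b)))).eval 0 = 0 := by
          rw [eval_finset_sum]
          exact Finset.sum_eq_zero fun a _ => by simp
        have : P.eval 0 = R0 * ∏ a ∈ s, (0 - a) - 1 := by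
          simp [hP, hz, evN, evD]
        rw [this, hR0]
        have e1 : (∏ a ∈ s, ((0 : K) - a)) = (-1) ^ m * ∏ a ∈ s, a := by
          rw [Finset.prod_congr rfl (fun a _ => by ring : ∀ a ∈ s, (0 : K) - a = -1 * a),
            prod_mul_distrib]
          simp [hm]
        rw [e1]
        have e2 : ((-1 : K) ^ m * ∏ a ∈ s, a⁻¹) * ((-1) ^ m * ∏ a ∈ s, a) = 1 := by
          rw [mul_mul_mul_comm, ← pow_add, Even.neg_one_pow ⟨m, rfl⟩, ← prod_mul_distrib,
            Finset.prod_congr rfl fun a ha => inv_mul_cancel₀ (hx a ha)]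
          simp
        rw [e2]; ring
      · -- eval at 1
        have hz : (∑ a ∈ s, C (A a) * (X * ((1 - X) * ∏ b ∈ s.erase a, (X - C b)))).eval 1 = 0 := by
          rw [eval_finset_sum]
          exact Finset.sum_eq_zero fun a _ => by simp
        have : P.eval 1 = ∏ a ∈ s, (1 - a) - ∏ a ∈ s, (1 - a * 1) := by
          simp [hP, hz, evN, evD]
        rw [this]; simp
      · -- eval at v ∈ s
        have hDv : D.eval v = 0 := by
          rw [evD]; exact Finset.prod_eq_zero hv (by ring)
        have evDj : (∏ b ∈ s.erase v, (X - C b)).eval v = ∏ b ∈ s.erase v, (v - b) := by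
          simp [eval_prod]
        have key : A v * (v * ((1 - v) * ∏ b ∈ s.erase v, (v - b))) = ∏ a ∈ s, (1 - v * a) := by
          have hprodne : (∏ b ∈ s.erase v, (v - b)) ≠ 0 :=
            Finset.prod_ne_zero_iff.mpr fun b hb =>
              sub_ne_zero_of_ne (Ne.symm (Finset.mem_erase.mp hb).1)
          rw [hA]
          simp only []
          rw [Finset.prod_div_distrib]
          rw [← Finset.mul_prod_erase s (fun a => 1 - v * a) hv]
          field_simp [hx v hv]
          ring
        have hsum : (∑ a ∈ s, C (A a) * (X * ((1 - X) * ∏ b ∈ s.erase a, (X - C b)))).eval v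
            = A v * (v * ((1 - v) * ∏ b ∈ s.erase v, (v - b))) := by
          rw [eval_finset_sum]
          rw [Finset.sum_eq_single v]
          · simp [evDj]
          · intro b hb hbv
            have : (∏ c ∈ s.erase b, (X - C c)).eval v = 0 := by
              rw [eval_prod]
              refine Finset.prod_eq_zero (Finset.mem_erase.mpr ⟨fun h => hbv (h ▸ rfl), hv⟩) ?_
              simp
            simp [this]
          · intro h; exact absurd hv h
        have hPv : P.eval v = A v * (v * ((1 - v) * ∏ b ∈ s.erase v, (v - b)))
            - ∏ a ∈ s, (1 - a * v) := by
          simp [hP, hDv, hsum, evN]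
        have e3 : (∏ a ∈ s, (1 - a * v)) = ∏ a ∈ s, (1 - v * a) :=
          Finset.prod_congr rfl fun a _ => by ring
        rw [hPv, key, e3, sub_self]
    · -- card
      have h0 : (0 : K) ∉ insert 1 s := by
        simp only [mem_insert]; push_neg
        exact ⟨by norm_num, fun h => hx 0 h rfl⟩
      have h1' : (1 : K) ∉ s := fun h => h1 1 h rfl
      rw [card_insert_of_notMem h0, card_insert_of_notMem h1']
      have hdeg : P.natDegree ≤ m + 1 := by
        rw [hP]
        refine le_trans (natDegree_sub_le _ _) (max_le ?_ (le_trans hNdeg (by omega)))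
        refine le_trans (natDegree_add_le _ _) (max_le (le_trans (natDegree_add_le _ _)
          (max_le ?_ ?_)) ?_)
        · refine le_trans (natDegree_mul_le) ?_
          simp only [natDegree_C, zero_add]
          refine le_trans (natDegree_mul_le) ?_
          have : D.natDegree ≤ m := le_of_eq hDdeg
          omega
        · refine le_trans (natDegree_mul_le) ?_
          simp only [natDegree_X, hDdeg]
          omega
        · refine natDegree_sum_le_of_forall_le _ _ fun a ha => ?_
          have hm1 : 1 ≤ m := hm ▸ Finset.card_pos.mpr ⟨a, ha⟩
          refine le_trans (natDegree_mul_le) ?_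
          simp only [natDegree_C, zero_add]
          refine le_trans (natDegree_mul_le) ?_
          have h2 : ((1 - X : K[X]) * ∏ b ∈ s.erase a, (X - C b)).natDegree ≤ 1 + (m - 1) :=
            le_trans (natDegree_mul_le) (by rw [hDjdeg a ha]; omega)
          simp only [natDegree_X]
          omega
      omega
  -- extract coefficient m+1
  have hcoeff : P.coeff (m + 1) = 0 := by rw [hPzero]; simp
  have cD : D.coeff m = 1 := hDdeg ▸ hDmonic.coeff_natDegree
  have c1 : (C R0 * ((1 - X) * D)).coeff (m + 1) = -R0 := by
    rw [coeff_C_mul]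
    have e : (1 - X : K[X]) * D = D - X * D := by ring
    rw [e, coeff_sub, coeff_X_mul, cD,
      coeff_eq_zero_of_natDegree_lt (by omega : D.natDegree < m + 1)]
    ring
  have c2 : (X * D).coeff (m + 1) = 1 := by rw [coeff_X_mul]; exact cD
  have c3 : (∑ a ∈ s, C (A a) * (X * ((1 - X) * ∏ b ∈ s.erase a, (X - C b)))).coeff (m + 1)
      = -∑ a ∈ s, A a := by
    rw [finset_sum_coeff, ← Finset.sum_neg_distrib]
    refine Finset.sum_congr rfl fun a ha => ?_
    have hm1 : 1 ≤ m := by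
      rw [hm]; exact Finset.card_pos.mpr ⟨a, ha⟩
    set Da := ∏ b ∈ s.erase a, (X - C b) with hDa
    have cDa1 : Da.coeff (m - 1) = 1 := (hDjdeg a ha) ▸ (hDjmonic a ha).coeff_natDegree
    have cDa0 : Da.coeff m = 0 :=
      coeff_eq_zero_of_natDegree_lt (by rw [hDjdeg a ha]; omega)
    rw [coeff_C_mul, coeff_X_mul]
    have e : (1 - X : K[X]) * Da = Da - X * Da := by ring
    have e2 : (X * Da).coeff m = Da.coeff (m - 1) := by
      conv_lhs => rw [show m = (m - 1) + 1 from (Nat.succ_pred_eq_of_pos hm1).symm]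
      rw [coeff_X_mul]
    rw [e, coeff_sub, cDa0, e2, cDa1]
    ring
  have c4 : N.coeff (m + 1) = 0 := coeff_eq_zero_of_natDegree_lt (by omega)
  rw [hP] at hcoeff
  simp only [coeff_sub, coeff_add, c1, c2, c3, c4] at hcoeff
  have hfin : ∑ a ∈ s, A a + R0 = 1 := by linear_combination -hcoeff
  rw [← hfin, hA]

theorem auxgen {K : Type*} [Field K] [DecidableEq K] (s : Finset K) (hx : ∀ a ∈ s, a ≠ 0) :
    (∑ a ∈ s, ((1 + a) / a) * ∏ b ∈ s.erase a, (1 - a * b) / (a - b))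
      + (-1 : K) ^ s.card * ∏ a ∈ s, a⁻¹ = 1 := by
  by_cases h1 : ∀ a ∈ s, a ≠ (1 : K)
  · exact core s hx h1
  · push_neg at h1
    obtain ⟨c, hc, hc1⟩ := h1
    subst hc1
    have hmem : (1 : K) ∈ s := hc
    set s' := s.erase 1 with hs'
    have hins : s = insert 1 s' := by rw [hs', Finset.insert_erase hmem]
    have h1s' : (1 : K) ∉ s' := Finset.notMem_erase _ _
    have hx' : ∀ a ∈ s', a ≠ 0 := fun a ha => hx a (Finset.mem_of_mem_erase ha)
    have hne1 : ∀ a ∈ s', a ≠ 1 := fun a ha => (Finset.mem_erase.mp ha).1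
    have hcore := core s' hx' hne1
    rw [hins, Finset.sum_insert h1s', Finset.prod_insert h1s',
      Finset.card_insert_of_notMem h1s', Finset.erase_insert h1s']
    have t1 : ((1 + (1 : K)) / 1) * ∏ b ∈ s', (1 - 1 * b) / (1 - b) = 2 := by
      have hp : ∏ b ∈ s', (1 - 1 * b) / ((1 : K) - b) = 1 := by
        apply Finset.prod_eq_one
        intro b hb
        have hb1 : (1 : K) - b ≠ 0 := sub_ne_zero_of_ne (Ne.symm (hne1 b hb))
        rw [one_mul, div_self hb1]
      rw [hp]; norm_num
    have hsum' : ∑ a ∈ s', ((1 + a) / a) * ∏ b ∈ (insert 1 s').erase a, (1 - a * b) / (a - b)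
        = -∑ a ∈ s', ((1 + a) / a) * ∏ b ∈ s'.erase a, (1 - a * b) / (a - b) := by
      rw [← Finset.sum_neg_distrib]
      refine Finset.sum_congr rfl fun a ha => ?_
      have ha1 : a ≠ 1 := hne1 a ha
      have h1mem : (1 : K) ∈ (insert 1 s').erase a :=
        Finset.mem_erase.mpr ⟨Ne.symm ha1, Finset.mem_insert_self _ _⟩
      rw [← Finset.mul_prod_erase _ _ h1mem]
      have e1 : (1 - a * 1) / (a - 1) = -1 := by
        rw [mul_one, show (1 : K) - a = -(a - 1) by ring, neg_div,
          div_self (sub_ne_zero_of_ne ha1)]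
      have e2 : ((insert 1 s').erase a).erase 1 = s'.erase a := by
        rw [Finset.erase_right_comm, Finset.erase_insert h1s']
      rw [e1, e2]
      ring
    rw [t1, hsum', inv_one, one_mul, pow_succ]
    linear_combination -hcore

/-- Lemma 4.1(i): for nonzero, pairwise distinct elements `x 1, …, x n` of a field,
`∑_j ((1+x_j)/x_j) ∏_{p≠j} (1 - x_j x_p)/(x_j - x_p) + (-1)^n ∏_k 1/x_k = 1`. -/
theorem stmt0 {K : Type*} [Field K] (n : ℕ) (hn : 0 < n) (x : Fin n → K)
    (hx : ∀ i, x i ≠ 0) (hinj : Function.Injective x) :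
    (∑ j : Fin n, ((1 + x j) / x j) *
        ∏ p ∈ Finset.univ.erase j, (1 - x j * x p) / (x j - x p))
      + (-1 : K) ^ n * ∏ k : Fin n, (x k)⁻¹ = 1 := by
  classical
  set t := Finset.image x Finset.univ with ht
  have hcard : t.card = n := by
    rw [ht, Finset.card_image_of_injective _ hinj, Finset.card_univ, Fintype.card_fin]
  have hx' : ∀ a ∈ t, a ≠ 0 := by
    rintro a ha
    obtain ⟨i, -, rfl⟩ := Finset.mem_image.mp ha
    exact hx i
  have e1 : ∑ a ∈ t, ((1 + a) / a) * ∏ b ∈ t.erase a, (1 - a * b) / (a - b)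
      = ∑ j : Fin n, ((1 + x j) / x j) *
          ∏ p ∈ Finset.univ.erase j, (1 - x j * x p) / (x j - x p) := by
    rw [ht, Finset.sum_image (fun i _ j _ h => hinj h)]
    refine Finset.sum_congr rfl fun j _ => ?_
    rw [← Finset.image_erase hinj, Finset.prod_image (fun i _ j _ h => hinj h)]
  have e2 : ∏ a ∈ t, a⁻¹ = ∏ k : Fin n, (x k)⁻¹ := by
    rw [ht, Finset.prod_image (fun i _ j _ h => hinj h)]
  rw [← e1, ← e2, ← hcard]
  exact auxgen t hx'
end

section
/- For every positive integer n, the polynomial identity ∑_{j=1}^{n} (-1)^j (1+x_j) ∏_{p≠j} x_p (1 - x_j x_p) ∏_{p<q, p,q≠j} (x_q - x_p) = (-1 + (-1)^n ∏_{p=1}^{n} x_p) ∏_{1≤p<q≤n} (x_q - x_p) holds in the polynomial ring ℚ[x_1,...,x_n]. -/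
open Polynomial

lemma lagrange_coeff_basis {F : Type*} [Field F] {ι : Type*} [DecidableEq ι]
    (s : Finset ι) (v : ι → F) (hvs : Set.InjOn v s) {i : ι} (hi : i ∈ s) :
    (Lagrange.basis s v i).coeff (s.card - 1) = (∏ j ∈ s.erase i, (v i - v j))⁻¹ := by
  have h1 : (Lagrange.basis s v i).coeff (s.card - 1) = (Lagrange.basis s v i).leadingCoeff := by
    rw [Polynomial.leadingCoeff, Lagrange.natDegree_basis hvs hi]
  rw [h1, Lagrange.basis, Polynomial.leadingCoeff_prod, ← Finset.prod_inv_distrib]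
  refine Finset.prod_congr rfl fun j hj => ?_
  rw [Lagrange.basisDivisor, Polynomial.leadingCoeff_mul, Polynomial.leadingCoeff_C,
    (Polynomial.monic_X_sub_C _).leadingCoeff, mul_one]

lemma sum_eval_div_prod_eq_zero {F : Type*} [Field F] {ι : Type*} [DecidableEq ι]
    (s : Finset ι) (v : ι → F) (hvs : Set.InjOn v s) (f : F[X])
    (hf : f.degree < ((s.card - 1 : ℕ) : WithBot ℕ)) :
    ∑ i ∈ s, f.eval (v i) * (∏ j ∈ s.erase i, (v i - v j))⁻¹ = 0 := by
  have hle : ((s.card - 1 : ℕ) : WithBot ℕ) ≤ (s.card : WithBot ℕ) :=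
    Nat.cast_le.mpr (Nat.sub_le _ _)
  have hlt : f.degree < s.card := hf.trans_le hle
  have h := Lagrange.eq_interpolate hvs hlt
  have hc := congrArg (fun p => Polynomial.coeff p (s.card - 1)) h
  simp only [Lagrange.interpolate_apply, Polynomial.finset_sum_coeff,
    Polynomial.coeff_C_mul] at hc
  rw [Polynomial.coeff_eq_zero_of_degree_lt hf] at hc
  rw [hc]
  exact Finset.sum_congr rfl fun i hi => by rw [lagrange_coeff_basis s v hvs hi]

lemma prod_univ_erase_none {α : Type*} [Fintype α] [DecidableEq α] {M : Type*} [CommMonoid M]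
    (g : Option α → M) :
    ∏ j ∈ (Finset.univ : Finset (Option α)).erase none, g j = ∏ x : α, g (some x) := by
  have h : (Finset.univ : Finset (Option α)).erase none
      = Finset.univ.map ⟨some, Option.some_injective α⟩ := by
    ext j; cases j <;> simp
  rw [h, Finset.prod_map]
  rfl

lemma prod_univ_erase_some {α : Type*} [Fintype α] [DecidableEq α] {M : Type*} [CommMonoid M]
    (g : Option α → M) (x : α) :
    ∏ j ∈ (Finset.univ : Finset (Option α)).erase (some x), g j
      = g none * ∏ y ∈ Finset.univ.erase x, g (some y) := by
  have h : (Finset.univ : Finset (Option α)).erase (some x)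
      = insert none ((Finset.univ.erase x).map ⟨some, Option.some_injective α⟩) := by
    ext j; cases j <;> simp
  rw [h, Finset.prod_insert (by simp), Finset.prod_map]
  rfl

lemma scalarC {K : Type*} [Field K] (n : ℕ) (a : Fin n → K)
    (hinj : Function.Injective a) (h0 : ∀ j, a j ≠ 0) (h1 : ∀ j, a j ≠ 1) :
    ∑ j : Fin n, (1 + a j) * (∏ p ∈ Finset.univ.erase j, (a p * (1 - a j * a p)))
        * (∏ p ∈ Finset.univ.erase j, (a j - a p))⁻¹
      = (-1 : K) ^ (n + 1) + ∏ p, a p := by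
  classical
  set P : K := ∏ p, a p with hPdef
  have hP : P ≠ 0 := Finset.prod_ne_zero_iff.mpr fun p _ => h0 p
  have hQ : ∏ p, (1 - a p) ≠ 0 :=
    Finset.prod_ne_zero_iff.mpr fun p _ => sub_ne_zero.mpr fun h => (h1 p) h.symm
  -- nodes
  set v : Option (Option (Fin n)) → K := fun i => i.elim 0 (fun o => o.elim 1 a) with hv
  have hv0 : v none = 0 := rfl
  have hv1 : v (some none) = 1 := rfl
  have hva : ∀ j, v (some (some j)) = a j := fun _ => rfl
  have hvinj : Function.Injective v := by
    rintro (_ | _ | i) (_ | _ | j) h <;>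
      simp only [hv0, hv1, hva] at h <;> first
        | rfl
        | (exact absurd h.symm one_ne_zero)
        | (exact absurd h one_ne_zero)
        | (exact absurd h.symm (h0 _))
        | (exact absurd h (h0 _))
        | (exact absurd h.symm (h1 _))
        | (exact absurd h (h1 _))
        | (rw [hinj h])
  -- the polynomial
  set f : K[X] := Polynomial.C P * ∏ p, (1 - Polynomial.C (a p) * Polynomial.X) with hf
  have hcard : (Finset.univ : Finset (Option (Option (Fin n)))).card = n + 2 := by
    simp [Finset.card_univ]
  have hdeg : f.degree < (((Finset.univ : Finset (Option (Option (Fin n)))).card - 1 : ℕ)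
      : WithBot ℕ) := by
    rw [hcard]
    have h2 : f.degree ≤ (n : WithBot ℕ) := by
      calc f.degree ≤ (Polynomial.C P).degree
            + (∏ p, (1 - Polynomial.C (a p) * Polynomial.X)).degree :=
          Polynomial.degree_mul_le _ _
        _ ≤ 0 + ∑ _p : Fin n, (1 : WithBot ℕ) := by
          refine add_le_add Polynomial.degree_C_le ?_
          refine (Polynomial.degree_prod_le _ _).trans ?_
          refine Finset.sum_le_sum fun p _ => ?_
          refine (Polynomial.degree_sub_le _ _).trans ?_
          simp only [Polynomial.degree_one, max_le_iff]
          constructor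
          · exact le_of_lt (by norm_num)
          · calc (Polynomial.C (a p) * Polynomial.X).degree
                ≤ (Polynomial.C (a p)).degree + Polynomial.X.degree :=
                  Polynomial.degree_mul_le _ _
              _ ≤ 0 + 1 := add_le_add Polynomial.degree_C_le (le_of_eq Polynomial.degree_X)
              _ = 1 := by norm_num
        _ = (n : WithBot ℕ) := by
          rw [zero_add, Finset.sum_const, Finset.card_univ, Fintype.card_fin, nsmul_eq_mul,
            mul_one]
    refine lt_of_le_of_lt h2 ?_
    have h3 : n + 2 - 1 = n + 1 := rfl
    rw [h3]
    exact_mod_cast Nat.lt_succ_self n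
  have key := sum_eval_div_prod_eq_zero Finset.univ v (Function.Injective.injOn hvinj) f hdeg
  rw [Fintype.sum_option] at key
  rw [Fintype.sum_option] at key
  -- evaluations
  have hev0 : f.eval 0 = P := by
    simp [hf, Polynomial.eval_prod]
  have hev1 : f.eval 1 = P * ∏ p, (1 - a p) := by
    simp [hf, Polynomial.eval_prod]
  have heva : ∀ j, f.eval (a j) = P * ∏ p, (1 - a j * a p) := by
    intro j
    have hc : ∀ p : Fin n, (1 : K) - a p * a j = 1 - a j * a p := fun p => by ring
    simp only [hf, Polynomial.eval_mul, Polynomial.eval_C, Polynomial.eval_prod,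
      Polynomial.eval_sub, Polynomial.eval_one, Polynomial.eval_X]
    simp_rw [hc]
  -- products at each node
  have hD0 : ∏ j ∈ (Finset.univ : Finset (Option (Option (Fin n)))).erase none,
      (v none - v j) = (-1) ^ (n + 1) * P := by
    rw [prod_univ_erase_none (fun j => v none - v j), Fintype.prod_option]
    simp only [hv0, hv1, hva, zero_sub]
    simp_rw [show ∀ j : Fin n, -a j = (-1) * a j from fun j => by ring]
    rw [Finset.prod_mul_distrib, Finset.prod_const, Finset.card_univ, Fintype.card_fin]
    ring
  have hD1 : ∏ j ∈ (Finset.univ : Finset (Option (Option (Fin n)))).erase (some none),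
      (v (some none) - v j) = ∏ p, (1 - a p) := by
    rw [prod_univ_erase_some (fun j => v (some none) - v j) none,
      prod_univ_erase_none (fun y => v (some none) - v (some y))]
    simp only [hv0, hv1, hva, sub_zero, one_mul]
  have hDj : ∀ j : Fin n, ∏ w ∈ (Finset.univ : Finset (Option (Option (Fin n)))).erase
      (some (some j)), (v (some (some j)) - v w)
      = a j * ((a j - 1) * ∏ p ∈ Finset.univ.erase j, (a j - a p)) := by
    intro j
    rw [prod_univ_erase_some (fun w => v (some (some j)) - v w) (some j),
      prod_univ_erase_some (fun y => v (some (some j)) - v (some y)) j]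
    simp only [hv0, hv1, hva, sub_zero]
  -- simplify key
  rw [hD0, hD1] at key
  simp only [hDj] at key
  simp only [hv0, hv1, hva] at key
  rw [hev0, hev1] at key
  simp only [heva] at key
  have hDne : ∀ j : Fin n, ∏ p ∈ Finset.univ.erase j, (a j - a p) ≠ 0 := by
    intro j
    refine Finset.prod_ne_zero_iff.mpr fun p hp => sub_ne_zero.mpr ?_
    exact fun h => (Finset.mem_erase.mp hp).1 (hinj h.symm)
  have e0 : P * ((-1 : K) ^ (n + 1) * P)⁻¹ = (-1) ^ (n + 1) := by
    rw [mul_inv, mul_comm ((-1 : K) ^ (n + 1))⁻¹ P⁻¹, ← mul_assoc, mul_inv_cancel₀ hP,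
      one_mul, ← inv_pow, inv_neg, inv_one]
  have e1 : (P * ∏ p, (1 - a p)) * (∏ p, (1 - a p))⁻¹ = P :=
    mul_inv_cancel_right₀ hQ _
  have ej : ∀ j : Fin n, (P * ∏ p, (1 - a j * a p))
      * (a j * ((a j - 1) * ∏ p ∈ Finset.univ.erase j, (a j - a p)))⁻¹
      = -((1 + a j) * (∏ p ∈ Finset.univ.erase j, (a p * (1 - a j * a p)))
        * (∏ p ∈ Finset.univ.erase j, (a j - a p))⁻¹) := by
    intro j
    have hsplit : ∏ p, (1 - a j * a p)
        = (1 - a j * a j) * ∏ p ∈ Finset.univ.erase j, (1 - a j * a p) :=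
      (Finset.mul_prod_erase Finset.univ _ (Finset.mem_univ j)).symm
    have hPsplit : P = a j * ∏ p ∈ Finset.univ.erase j, a p :=
      (Finset.mul_prod_erase Finset.univ _ (Finset.mem_univ j)).symm
    rw [hsplit, hPsplit, Finset.prod_mul_distrib]
    have hj1 : a j - 1 ≠ 0 := sub_ne_zero.mpr (h1 j)
    field_simp [h0 j, hj1, hDne j]
    ring
  simp only [e0, e1, ej] at key
  rw [Finset.sum_neg_distrib] at key
  linear_combination -key


lemma erase_eq_Iio_union_Ioi {n : ℕ} (j : Fin n) :
    (Finset.univ : Finset (Fin n)).erase j = Finset.Iio j ∪ Finset.Ioi j := by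
  ext x
  simp [Finset.mem_erase, Finset.mem_Iio, Finset.mem_Ioi, lt_or_lt_iff_ne, ne_comm]

lemma vand_split {R : Type*} [CommRing R] {n : ℕ} (b : Fin n → R) (j : Fin n) :
    ∏ p : Fin n, ∏ q ∈ Finset.univ.filter (fun q => p < q), (b q - b p)
      = ((∏ p ∈ Finset.Iio j, (b j - b p))
        * ∏ q ∈ Finset.Ioi j, (b q - b j))
        * ∏ p ∈ Finset.univ.erase j,
            ∏ q ∈ (Finset.univ.erase j).filter (fun q => p < q), (b q - b p) := by
  classical
  rw [← Finset.prod_erase_mul Finset.univ _ (Finset.mem_univ j)]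
  have hIoi : Finset.univ.filter (fun q => j < q) = Finset.Ioi j := by
    ext q; simp [Finset.mem_Ioi]
  have hinner : ∀ p ∈ Finset.univ.erase j,
      ∏ q ∈ Finset.univ.filter (fun q => p < q), (b q - b p)
        = (if p < j then (b j - b p) else 1)
          * ∏ q ∈ (Finset.univ.erase j).filter (fun q => p < q), (b q - b p) := by
    intro p hp
    by_cases hpj : p < j
    · have hset : Finset.univ.filter (fun q => p < q)
          = insert j ((Finset.univ.erase j).filter (fun q => p < q)) := by
        ext q
        simp only [Finset.mem_filter, Finset.mem_univ, true_and, Finset.mem_insert,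
          Finset.mem_erase]
        constructor
        · intro h
          by_cases hqj : q = j
          · exact Or.inl hqj
          · exact Or.inr ⟨⟨hqj, trivial⟩, h⟩
        · rintro (rfl | ⟨_, h⟩)
          · exact hpj
          · exact h
      rw [hset, Finset.prod_insert (by simp), if_pos hpj]
    · have hset : Finset.univ.filter (fun q => p < q)
          = (Finset.univ.erase j).filter (fun q => p < q) := by
        ext q
        simp only [Finset.mem_filter, Finset.mem_univ, true_and, Finset.mem_erase]
        constructor
        · intro h
          exact ⟨⟨fun hqj => hpj (by subst hqj; exact h), trivial⟩, h⟩
        · exact fun h => h.2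
      rw [hset, if_neg hpj, one_mul]
  rw [Finset.prod_congr rfl hinner, Finset.prod_mul_distrib, hIoi]
  have hif : ∏ p ∈ Finset.univ.erase j, (if p < j then (b j - b p) else 1)
      = ∏ p ∈ Finset.Iio j, (b j - b p) := by
    rw [← Finset.prod_filter]
    congr 1
    ext p
    simp only [Finset.mem_filter, Finset.mem_erase, Finset.mem_univ, true_and, Finset.mem_Iio,
      and_iff_right_iff_imp]
    exact fun h => ⟨ne_of_lt h, trivial⟩
  rw [hif]
  ring


lemma scalarD {K : Type*} [Field K] (n : ℕ) (a : Fin n → K)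
    (hinj : Function.Injective a) (h0 : ∀ j, a j ≠ 0) (h1 : ∀ j, a j ≠ 1) :
    ∑ j : Fin n, (-1 : K) ^ ((j : ℕ) + 1) * (1 + a j) *
        (∏ p ∈ Finset.univ.erase j, (a p * (1 - a j * a p))) *
        ∏ p ∈ Finset.univ.erase j,
          ∏ q ∈ (Finset.univ.erase j).filter (fun q => p < q), (a q - a p)
      = (-1 + (-1 : K) ^ n * ∏ p, a p) *
          ∏ p : Fin n, ∏ q ∈ Finset.univ.filter (fun q => p < q), (a q - a p) := by
  classical
  set V : K := ∏ p : Fin n, ∏ q ∈ Finset.univ.filter (fun q => p < q), (a q - a p) with hVdef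
  have hterm : ∀ j : Fin n,
      (-1 : K) ^ ((j : ℕ) + 1) * (1 + a j) *
        (∏ p ∈ Finset.univ.erase j, (a p * (1 - a j * a p))) *
        ∏ p ∈ Finset.univ.erase j,
          ∏ q ∈ (Finset.univ.erase j).filter (fun q => p < q), (a q - a p)
      = (-1 : K) ^ n * V *
        ((1 + a j) * (∏ p ∈ Finset.univ.erase j, (a p * (1 - a j * a p)))
          * (∏ p ∈ Finset.univ.erase j, (a j - a p))⁻¹) := by
    intro j
    set A : K := ∏ p ∈ Finset.Iio j, (a j - a p) with hAdef
    set B : K := ∏ q ∈ Finset.Ioi j, (a q - a j) with hBdef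
    set c : ℕ := n - 1 - (j : ℕ) with hcdef
    have hA : A ≠ 0 := Finset.prod_ne_zero_iff.mpr fun p hp =>
      sub_ne_zero.mpr fun h => (ne_of_lt (Finset.mem_Iio.mp hp)) (hinj h).symm
    have hB : B ≠ 0 := Finset.prod_ne_zero_iff.mpr fun q hq =>
      sub_ne_zero.mpr fun h => (ne_of_lt (Finset.mem_Ioi.mp hq)) (hinj h).symm
    have hV : V = (A * B) * ∏ p ∈ Finset.univ.erase j,
        ∏ q ∈ (Finset.univ.erase j).filter (fun q => p < q), (a q - a p) := vand_split a j
    have hD : ∏ p ∈ Finset.univ.erase j, (a j - a p) = A * ((-1) ^ c * B) := by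
      rw [erase_eq_Iio_union_Ioi j, Finset.prod_union ((Finset.disjoint_Ioi_Iio j).symm)]
      congr 1
      simp_rw [show ∀ q : Fin n, a j - a q = -1 * (a q - a j) from fun q => by ring]
      rw [Finset.prod_mul_distrib, Finset.prod_const, Fin.card_Ioi]
    have hsign : (-1 : K) ^ ((j : ℕ) + 1) * (-1) ^ c = (-1) ^ n := by
      rw [← pow_add]
      congr 1
      have := j.isLt
      omega
    rw [hV, hD, ← hsign]
    field_simp
  rw [Finset.sum_congr rfl fun j _ => hterm j, ← Finset.mul_sum,
    scalarC n a hinj h0 h1]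
  have ho : (-1 : K) ^ n * (-1) ^ (n + 1) = -1 := by
    rw [← pow_add]
    exact Odd.neg_one_pow ⟨n, by ring⟩
  linear_combination V * ho


open MvPolynomial in
lemma mv_ne_zero_of_eval {σ : Type*} (p : MvPolynomial σ ℚ) (x : σ → ℚ)
    (h : eval x p ≠ 0) : p ≠ 0 := fun hp => h (by rw [hp, map_zero])

open MvPolynomial

/-- Equation (4.1): a polynomial identity in `ℚ[x_1,…,x_n]`.  The variables are
indexed by `Fin n` (zero-based), so the paper's index `j ∈ {1,…,n}` corresponds to
`j.val + 1`. -/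
theorem stmt1 (n : ℕ) (hn : 0 < n) :
    (∑ j : Fin n, (-1 : MvPolynomial (Fin n) ℚ) ^ ((j : ℕ) + 1) * (1 + X j) *
        (∏ p ∈ Finset.univ.erase j, (X p * (1 - X j * X p))) *
        ∏ p ∈ Finset.univ.erase j,
          ∏ q ∈ (Finset.univ.erase j).filter (fun q => p < q), (X q - X p))
    = (-1 + (-1 : MvPolynomial (Fin n) ℚ) ^ n * ∏ p : Fin n, X p) *
        ∏ p : Fin n, ∏ q ∈ Finset.univ.filter (fun q => p < q), (X q - X p) := by
  classical
  set M : MvPolynomial (Fin n) ℚ :=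
    (∏ j : Fin n, (X j * (1 - X j))) *
      ∏ p : Fin n, ∏ q ∈ Finset.univ.filter (fun q => p < q), (X q - X p) with hMdef
  have hM : M ≠ 0 := by
    refine mul_ne_zero ?_ ?_
    · refine Finset.prod_ne_zero_iff.mpr fun j _ => mul_ne_zero (X_ne_zero j) ?_
      refine mv_ne_zero_of_eval _ (fun _ => 0) ?_
      simp
    · refine Finset.prod_ne_zero_iff.mpr fun p _ => Finset.prod_ne_zero_iff.mpr fun q hq => ?_
      have hpq : p ≠ q := ne_of_lt (Finset.mem_filter.mp hq).2
      refine mv_ne_zero_of_eval _ (fun i => if i = q then 1 else 0) ?_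
      simp [hpq]
  suffices h : (∑ j : Fin n, (-1 : MvPolynomial (Fin n) ℚ) ^ ((j : ℕ) + 1) * (1 + X j) *
        (∏ p ∈ Finset.univ.erase j, (X p * (1 - X j * X p))) *
        ∏ p ∈ Finset.univ.erase j,
          ∏ q ∈ (Finset.univ.erase j).filter (fun q => p < q), (X q - X p)) * M
      = ((-1 + (-1 : MvPolynomial (Fin n) ℚ) ^ n * ∏ p : Fin n, X p) *
        ∏ p : Fin n, ∏ q ∈ Finset.univ.filter (fun q => p < q), (X q - X p)) * M by
    exact mul_right_cancel₀ hM h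
  apply MvPolynomial.funext
  intro x
  rw [show eval x (_ * M) = _ * eval x M from map_mul _ _ _,
    show eval x (_ * M) = _ * eval x M from map_mul _ _ _]
  by_cases hx : eval x M = 0
  · rw [hx, mul_zero, mul_zero]
  · have hx' : (∏ j : Fin n, (x j * (1 - x j))) *
        (∏ p : Fin n, ∏ q ∈ Finset.univ.filter (fun q => p < q), (x q - x p)) ≠ 0 := by
      intro h
      apply hx
      rw [hMdef]
      simp only [map_mul, map_prod, map_sub, map_one, MvPolynomial.eval_X]
      exact h
    have h0 : ∀ j : Fin n, x j ≠ 0 := by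
      intro j
      have := Finset.prod_ne_zero_iff.mp (mul_ne_zero_iff.mp hx').1 j (Finset.mem_univ j)
      exact (mul_ne_zero_iff.mp this).1
    have h1 : ∀ j : Fin n, x j ≠ 1 := by
      intro j
      have := Finset.prod_ne_zero_iff.mp (mul_ne_zero_iff.mp hx').1 j (Finset.mem_univ j)
      have h2 := (mul_ne_zero_iff.mp this).2
      exact fun h => h2 (by rw [h]; ring)
    have hinj : Function.Injective x := by
      intro p q h
      by_contra hne
      rcases lt_or_gt_of_ne hne with hlt | hgt
      · exact (mul_ne_zero_iff.mp hx').2 (Finset.prod_eq_zero (Finset.mem_univ p)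
          (Finset.prod_eq_zero (Finset.mem_filter.mpr ⟨Finset.mem_univ q, hlt⟩)
            (by rw [h, sub_self])))
      · exact (mul_ne_zero_iff.mp hx').2 (Finset.prod_eq_zero (Finset.mem_univ q)
          (Finset.prod_eq_zero (Finset.mem_filter.mpr ⟨Finset.mem_univ p, hgt⟩)
            (by rw [h, sub_self])))
    have hkey := scalarD n x hinj h0 h1
    have hL : eval x (∑ j : Fin n, (-1 : MvPolynomial (Fin n) ℚ) ^ ((j : ℕ) + 1) * (1 + X j) *
        (∏ p ∈ Finset.univ.erase j, (X p * (1 - X j * X p))) *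
        ∏ p ∈ Finset.univ.erase j,
          ∏ q ∈ (Finset.univ.erase j).filter (fun q => p < q), (X q - X p))
        = ∑ j : Fin n, (-1 : ℚ) ^ ((j : ℕ) + 1) * (1 + x j) *
        (∏ p ∈ Finset.univ.erase j, (x p * (1 - x j * x p))) *
        ∏ p ∈ Finset.univ.erase j,
          ∏ q ∈ (Finset.univ.erase j).filter (fun q => p < q), (x q - x p) := by
      simp only [map_sum, map_mul, map_prod, map_pow, map_add, map_sub, map_neg, map_one,
        MvPolynomial.eval_X]
    have hR : eval x ((-1 + (-1 : MvPolynomial (Fin n) ℚ) ^ n * ∏ p : Fin n, X p) *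
        ∏ p : Fin n, ∏ q ∈ Finset.univ.filter (fun q => p < q), (X q - X p))
        = (-1 + (-1 : ℚ) ^ n * ∏ p, x p) *
          ∏ p : Fin n, ∏ q ∈ Finset.univ.filter (fun q => p < q), (x q - x p) := by
      simp only [map_mul, map_prod, map_pow, map_add, map_sub, map_neg, map_one, MvPolynomial.eval_X]
    rw [hL, hR, hkey]
end

section
/- For any positive integer n, ∑_{0 ≤ k_1 < k_2 < ... < k_n} ∏_{i=1}^{n} x_i^{k_i} = ∏_{i=1}^{n} x_i^{i-1}/(1 - ∏_{j=i}^{n} x_j), where the sum is over all strictly increasing sequences of nonnegative integers and convergence is in the ring of formal power series ℚ[[x_1,...,x_n]]. -/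
open scoped Classical

open Finset MvPowerSeries

namespace Stmt3Aux

variable {n : ℕ}

/-- The exponent vector which is `1` on indices `j ≥ i` and `0` below. -/
noncomputable def ee (n : ℕ) (i : Fin n) : Fin n →₀ ℕ :=
  Finsupp.equivFunOnFinite.symm fun j => if i ≤ j then 1 else 0

lemma ee_apply (i j : Fin n) : ee n i j = if i ≤ j then 1 else 0 := rfl

lemma ee_ne_zero (i : Fin n) : ee n i ≠ 0 := by
  intro h
  have h1 : ee n i i = 0 := by rw [h]; rfl
  rw [ee_apply, if_pos le_rfl] at h1
  exact one_ne_zero h1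

lemma ee_sum (i : Fin n) :
    ee n i = ∑ j ∈ univ.filter (fun j => i ≤ j), Finsupp.single j 1 := by
  ext j
  rw [Finsupp.finset_sum_apply]
  simp only [Finsupp.single_apply, ee_apply]
  rw [Finset.sum_ite_eq' (univ.filter (fun j => i ≤ j)) j (fun _ => 1)]
  simp

lemma prod_X_eq (i : Fin n) :
    ∏ j ∈ univ.filter (fun j => i ≤ j), (X j : MvPowerSeries (Fin n) ℚ) =
      monomial (ee n i) 1 := by
  rw [ee_sum]
  generalize (univ.filter (fun j => i ≤ j) : Finset (Fin n)) = s
  induction s using Finset.induction_on with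
  | empty => simp
  | insert _ _ h ih =>
    rw [Finset.prod_insert h, Finset.sum_insert h, ih, X, monomial_mul_monomial, one_mul]

/-- The series `∑_{c ≥ 0} (∏_{j ≥ i} x_j)^c`. -/
noncomputable def S (n : ℕ) (i : Fin n) : MvPowerSeries (Fin n) ℚ :=
  fun d => if ∃ c : ℕ, d = c • ee n i then 1 else 0

lemma coeff_S (i : Fin n) (d : Fin n →₀ ℕ) :
    coeff d (S n i) = if ∃ c : ℕ, d = c • ee n i then 1 else 0 := rfl

lemma S_mul (i : Fin n) : S n i * (1 - monomial (ee n i) 1) = 1 := by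
  ext d
  rw [mul_sub, mul_one, map_sub, coeff_S, coeff_mul_monomial, coeff_one]
  by_cases h0 : d = 0
  · subst h0
    rw [if_pos ⟨0, by simp⟩, if_pos rfl, if_neg, sub_zero]
    intro hle
    refine ee_ne_zero i ?_
    ext j
    simpa using Finsupp.le_def.mp hle j
  · rw [if_neg h0]
    by_cases h1 : ∃ c : ℕ, d = c • ee n i
    · obtain ⟨c, rfl⟩ := h1
      have hc : c ≠ 0 := by rintro rfl; exact h0 (zero_smul _ _)
      have hle : ee n i ≤ c • ee n i := by
        intro j
        rw [Finsupp.smul_apply, smul_eq_mul]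
        exact Nat.le_mul_of_pos_left _ (Nat.pos_of_ne_zero hc)
      have hB : c • ee n i - ee n i = (c - 1) • ee n i := by
        ext j
        rw [Finsupp.tsub_apply, Finsupp.smul_apply, Finsupp.smul_apply, smul_eq_mul,
          smul_eq_mul, Nat.sub_mul, one_mul]
      rw [if_pos (⟨c, rfl⟩ : ∃ c' : ℕ, c • ee n i = c' • ee n i), if_pos hle, coeff_S,
        if_pos ⟨c - 1, hB⟩]
      ring
    · rw [if_neg h1, zero_sub, neg_eq_zero]
      split_ifs with hle
      · rw [coeff_S, if_neg, zero_mul]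
        rintro ⟨c, hc⟩
        exact h1 ⟨c + 1, by
          rw [← tsub_add_cancel_of_le hle, hc, succ_nsmul]⟩
      · rfl

lemma inv_eq (i : Fin n) :
    (1 - ∏ j ∈ univ.filter (fun j => i ≤ j), (X j : MvPowerSeries (Fin n) ℚ))⁻¹ = S n i := by
  rw [prod_X_eq]
  refine (MvPowerSeries.inv_eq_iff_mul_eq_one ?_).mpr (S_mul i)
  rw [map_sub, map_one, ← coeff_zero_eq_constantCoeff_apply, coeff_monomial,
    if_neg (fun h => ee_ne_zero i h.symm)]
  simp

lemma coeff_term (i : Fin n) (x : Fin n →₀ ℕ) :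
    coeff x ((X i : MvPowerSeries (Fin n) ℚ) ^ (i : ℕ) * S n i) =
      if ∃ c : ℕ, x = Finsupp.single i (i : ℕ) + c • ee n i then 1 else 0 := by
  rw [X_pow_eq, coeff_monomial_mul]
  by_cases h : Finsupp.single i (i : ℕ) ≤ x
  · rw [if_pos h, one_mul, coeff_S]
    refine if_congr ⟨fun ⟨c, hc⟩ => ⟨c, ?_⟩, fun ⟨c, hc⟩ => ⟨c, ?_⟩⟩ rfl rfl
    · rw [← hc, add_tsub_cancel_of_le h]
    · rw [hc, add_tsub_cancel_left]
  · rw [if_neg h, if_neg]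
    rintro ⟨c, rfl⟩
    exact h le_self_add

/-- Partial sums of `c` up to index `j`. -/
def psum (c : Fin n → ℕ) (j : Fin n) : ℕ := ∑ i ∈ univ.filter (· ≤ j), c i

lemma key_apply (c : Fin n → ℕ) (j : Fin n) :
    (∑ i : Fin n, (Finsupp.single i (i : ℕ) + c i • ee n i)) j = (j : ℕ) + psum c j := by
  rw [Finsupp.finset_sum_apply]
  simp only [Finsupp.add_apply, Finsupp.smul_apply, Finsupp.single_apply, ee_apply,
    smul_eq_mul, mul_ite, mul_one, mul_zero]
  rw [Finset.sum_add_distrib]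
  congr 1
  · simp
  · rw [← Finset.sum_filter]
    rfl

lemma psum_mono (c : Fin n → ℕ) {j j' : Fin n} (h : j < j') : psum c j ≤ psum c j' := by
  apply Finset.sum_le_sum_of_subset
  intro i hi
  simp only [Finset.mem_filter, Finset.mem_univ, true_and] at hi ⊢
  exact le_trans hi (le_of_lt h)

lemma filter_le_eq_insert {j j' : Fin n} (hj : (j' : ℕ) + 1 = (j : ℕ)) :
    univ.filter (· ≤ j) = insert j (univ.filter (· ≤ j')) := by
  ext i
  simp only [Finset.mem_filter, Finset.mem_univ, true_and, Finset.mem_insert,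
    Fin.le_def, Fin.ext_iff]
  omega

lemma psum_inj {c c' : Fin n → ℕ}
    (h : ∀ j : Fin n, (j : ℕ) + psum c j = (j : ℕ) + psum c' j) : c = c' := by
  have H : ∀ m : ℕ, ∀ j : Fin n, (j : ℕ) = m → c j = c' j := by
    intro m
    induction m using Nat.strong_induction_on with
    | _ m ih =>
      intro j hj
      have hps : psum c j = psum c' j := by have := h j; omega
      have hsplit : ∀ f : Fin n → ℕ, psum f j = f j + ∑ i ∈ univ.filter (· < j), f i := by
        intro f
        have hset : univ.filter (· ≤ j) = insert j (univ.filter (· < j)) := by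
          ext i
          simp only [Finset.mem_filter, Finset.mem_univ, true_and, Finset.mem_insert,
            Fin.le_def, Fin.lt_def, Fin.ext_iff]
          omega
        rw [psum, hset, Finset.sum_insert (by simp)]
      have hlt : ∑ i ∈ univ.filter (· < j), c i = ∑ i ∈ univ.filter (· < j), c' i := by
        refine Finset.sum_congr rfl fun i hi => ?_
        simp only [Finset.mem_filter, Finset.mem_univ, true_and, Fin.lt_def] at hi
        exact ih (i : ℕ) (by omega) i rfl
      have h1 := hsplit c
      have h2 := hsplit c'
      omega
  funext j
  exact H _ j rfl

lemma exists_c (d : Fin n →₀ ℕ) (hd : StrictMono ⇑d) :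
    ∃ c : Fin n → ℕ, ∀ j : Fin n, (j : ℕ) + psum c j = d j := by
  refine ⟨fun j =>
    if h : (j : ℕ) = 0 then d j
    else d j - d ⟨(j : ℕ) - 1, lt_of_le_of_lt (Nat.sub_le _ _) j.isLt⟩ - 1, ?_⟩
  set c : Fin n → ℕ := fun j =>
    if h : (j : ℕ) = 0 then d j
    else d j - d ⟨(j : ℕ) - 1, lt_of_le_of_lt (Nat.sub_le _ _) j.isLt⟩ - 1 with hc
  have H : ∀ m : ℕ, ∀ j : Fin n, (j : ℕ) = m → (j : ℕ) + psum c j = d j := by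
    intro m
    induction m using Nat.strong_induction_on with
    | _ m ih =>
      intro j hj
      rcases Nat.eq_zero_or_pos m with hm | hm
      · have hj0 : (j : ℕ) = 0 := by omega
        have hset : univ.filter (· ≤ j) = {j} := by
          ext i
          simp only [Finset.mem_filter, Finset.mem_univ, true_and, Finset.mem_singleton,
            Fin.le_def, Fin.ext_iff]
          omega
        have hcj : c j = d j := by rw [hc]; simp [hj0]
        rw [psum, hset, Finset.sum_singleton, hcj, hj0, zero_add]
      · set j' : Fin n := ⟨m - 1, by omega⟩ with hj'def
        have hj' : j' < j := by
          rw [Fin.lt_def]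
          have hj'v : (j' : ℕ) = m - 1 := rfl
          omega
        have ihj : (j' : ℕ) + psum c j' = d j' := ih (m - 1) (by omega) j' rfl
        have hdd : d j' < d j := hd hj'
        have hcj : c j = d j - d j' - 1 := by
          have h1 : c j = if h : (j : ℕ) = 0 then d j
              else d j - d ⟨(j : ℕ) - 1, lt_of_le_of_lt (Nat.sub_le _ _) j.isLt⟩ - 1 := rfl
          have hj'v : (j' : ℕ) = m - 1 := rfl
          have h2 : (⟨(j : ℕ) - 1, lt_of_le_of_lt (Nat.sub_le _ _) j.isLt⟩ : Fin n) = j' :=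
            Fin.ext (show (j : ℕ) - 1 = (j' : ℕ) by omega)
          rw [h1, dif_neg (show ¬((j : ℕ) = 0) by omega), h2]
        have hj'v : (j' : ℕ) = m - 1 := rfl
        have hsplit : univ.filter (· ≤ j) = insert j (univ.filter (· ≤ j')) :=
          filter_le_eq_insert (by omega)
        have hnm : j ∉ univ.filter (· ≤ j') := by
          simp only [Finset.mem_filter, Finset.mem_univ, true_and, Fin.le_def]
          omega
        rw [psum, hsplit, Finset.sum_insert hnm]
        have hps : ∑ i ∈ univ.filter (· ≤ j'), c i = psum c j' := rfl
        rw [hps]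
        omega
  exact fun j => H _ j rfl

end Stmt3Aux

open Stmt3Aux

/-- `∑_{0 ≤ k_1 < ⋯ < k_n} ∏ x_i^{k_i} = ∏_i x_i^{i-1}/(1 - ∏_{j=i}^n x_j)` in
`ℚ[[x_1,…,x_n]]`.  The left-hand side is the formal power series whose coefficient
at the monomial `x^d` is `1` if the exponent vector `d` is strictly increasing and
`0` otherwise; the statement is the coefficientwise equality with the right-hand side. -/
theorem stmt3 (n : ℕ) (hn : 0 < n) :
    ∀ d : Fin n →₀ ℕ,
      MvPowerSeries.coeff d
        (∏ i : Fin n, (MvPowerSeries.X i) ^ (i : ℕ) *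
          (1 - ∏ j ∈ Finset.univ.filter (fun j => i ≤ j),
                (MvPowerSeries.X j : MvPowerSeries (Fin n) ℚ))⁻¹)
      = if StrictMono (⇑d) then 1 else 0 := by
  intro d
  rw [Finset.prod_congr rfl fun i _ => by rw [inv_eq i]]
  rw [MvPowerSeries.coeff_prod]
  rw [Finset.sum_congr rfl fun l _ => by
    rw [Finset.prod_congr rfl fun i _ => coeff_term i (l i), Fintype.prod_boole]]
  by_cases hd : StrictMono ⇑d
  · rw [if_pos hd]
    obtain ⟨c, hc⟩ := exists_c d hd
    set l₀ : Fin n →₀ (Fin n →₀ ℕ) :=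
      Finsupp.equivFunOnFinite.symm
        (fun i => Finsupp.single i (i : ℕ) + c i • ee n i) with hl₀
    have hl₀app : ∀ i, l₀ i = Finsupp.single i (i : ℕ) + c i • ee n i := fun i => rfl
    have hl₀sum : ∑ i : Fin n, l₀ i = d := by
      ext j
      rw [Finset.sum_congr rfl fun i _ => hl₀app i, key_apply, hc]
    have hmem : l₀ ∈ Finset.finsuppAntidiag Finset.univ d :=
      Finset.mem_finsuppAntidiag.mpr ⟨hl₀sum, Finset.subset_univ _⟩
    rw [Finset.sum_eq_single_of_mem l₀ hmem ?_]
    · exact if_pos fun i => ⟨c i, hl₀app i⟩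
    · intro b hb hne
      rw [if_neg]
      intro hgood
      apply hne
      choose c' hc' using hgood
      have hbsum : ∑ i : Fin n, b i = d := (Finset.mem_finsuppAntidiag.mp hb).1
      have hd' : ∀ j : Fin n, (j : ℕ) + psum c' j = d j := fun j => by
        rw [← hbsum, Finset.sum_congr rfl fun i _ => hc' i, key_apply]
      have hcc : c' = c := psum_inj fun j => by rw [hd' j, ← hc j]
      ext i a
      rw [hc' i, hcc, ← hl₀app i]
  · rw [if_neg hd]
    refine Finset.sum_eq_zero fun l hl => ?_
    rw [if_neg]
    intro hgood
    apply hd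
    choose c hc using hgood
    have hsum : ∑ i : Fin n, l i = d := (Finset.mem_finsuppAntidiag.mp hl).1
    have hdj : ∀ j : Fin n, d j = (j : ℕ) + psum c j := fun j => by
      rw [← hsum, Finset.sum_congr rfl fun i _ => hc i, key_apply]
    intro a b hab
    have h1 : (a : ℕ) < (b : ℕ) := hab
    have h2 : psum c a ≤ psum c b := psum_mono c hab
    show d a < d b
    rw [hdj a, hdj b]
    omega
end

section
/- For a strictly increasing integer sequence (k_1,...,k_n), the modified Robbins polynomial satisfies R*_{(k_1,...,k_n)}(x_1,...,x_n; 1,1,0) = s_{(k_n - n + 1, k_{n-1} - n + 2, ..., k_2 - 1, k_1)}(x_1,...,x_n) · ∏_{1≤i<j≤n} (1 + x_i x_j). -/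
open scoped Classical

/-- The modified Robbins polynomial
`R*_k(x_1,…,x_n; u,v,w)
  = asym[∏_{i<j}(u x_i x_j + v + w x_i) ∏_i x_i^{k_i}] / ∏_{i<j}(x_j - x_i)`. -/
noncomputable def Rstar {K : Type*} [Field K] (n : ℕ) (k : Fin n → ℤ)
    (x : Fin n → K) (u v w : K) : K :=
  (∑ σ : Equiv.Perm (Fin n), ((Equiv.Perm.sign σ : ℤ) : K) *
      ((∏ i : Fin n, ∏ j ∈ Finset.univ.filter (fun j => i < j),
          (u * x (σ i) * x (σ j) + v + w * x (σ i))) *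
        ∏ i : Fin n, x (σ i) ^ (k i))) /
    ∏ i : Fin n, ∏ j ∈ Finset.univ.filter (fun j => i < j), (x j - x i)

/-- The Schur polynomial via the bialternant formula, with the convention that it
is `0` if `λ` is not weakly decreasing. -/
noncomputable def schur {K : Type*} [Field K] (n : ℕ) (lam : Fin n → ℤ)
    (x : Fin n → K) : K :=
  if Antitone lam then
    (Matrix.det (Matrix.of fun i j : Fin n => x i ^ (lam j + ((n - 1 - (j : ℕ) : ℕ) : ℤ)))) /
      ∏ i : Fin n, ∏ j ∈ Finset.univ.filter (fun j => i < j), (x i - x j)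
  else 0

/-- Permutation invariance of a product over pairs `i < j` of a symmetric function. -/
lemma pairProd_perm {K : Type*} [CommMonoid K] {n : ℕ} (f : Fin n → Fin n → K)
    (hf : ∀ i j, f i j = f j i) (σ : Equiv.Perm (Fin n)) :
    (∏ i : Fin n, ∏ j ∈ Finset.univ.filter (fun j => i < j), f (σ i) (σ j))
      = ∏ i : Fin n, ∏ j ∈ Finset.univ.filter (fun j => i < j), f i j := by
  rw [Finset.prod_sigma', Finset.prod_sigma']
  refine Finset.prod_nbij'
    (fun p => if σ p.1 < σ p.2 then ⟨σ p.1, σ p.2⟩ else ⟨σ p.2, σ p.1⟩)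
    (fun p => if σ⁻¹ p.1 < σ⁻¹ p.2 then ⟨σ⁻¹ p.1, σ⁻¹ p.2⟩ else ⟨σ⁻¹ p.2, σ⁻¹ p.1⟩)
    ?_ ?_ ?_ ?_ ?_
  · rintro ⟨a, b⟩ hab
    simp only [Finset.mem_sigma, Finset.mem_univ, Finset.mem_filter, true_and] at hab ⊢
    by_cases h : σ a < σ b
    · simp [h]
    · have hne : σ a ≠ σ b := fun he => absurd hab (σ.injective he ▸ lt_irrefl a)
      simp [h, lt_of_le_of_ne (not_lt.mp h) hne.symm]
  · rintro ⟨a, b⟩ hab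
    simp only [Finset.mem_sigma, Finset.mem_univ, Finset.mem_filter, true_and] at hab ⊢
    by_cases h : σ⁻¹ a < σ⁻¹ b
    · simp [show σ.symm a < σ.symm b from h]
    · have hne : σ⁻¹ a ≠ σ⁻¹ b := fun he => absurd hab (σ⁻¹.injective he ▸ lt_irrefl a)
      simp [show ¬σ.symm a < σ.symm b from h,
        show σ.symm b < σ.symm a from lt_of_le_of_ne (not_lt.mp h) hne.symm]
  · rintro ⟨a, b⟩ hab
    simp only [Finset.mem_sigma, Finset.mem_univ, Finset.mem_filter, true_and] at hab
    by_cases h : σ a < σ b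
    · simp [h, hab]
    · simp [h, not_lt.mpr hab.le]
  · rintro ⟨a, b⟩ hab
    simp only [Finset.mem_sigma, Finset.mem_univ, Finset.mem_filter, true_and] at hab
    by_cases h : σ⁻¹ a < σ⁻¹ b
    · simp [show σ.symm a < σ.symm b from h, hab]
    · simp [show ¬σ.symm a < σ.symm b from h, not_lt.mpr hab.le]
  · rintro ⟨a, b⟩ hab
    by_cases h : σ a < σ b
    · simp [h]
    · simp [h, hf (σ a) (σ b)]

/-- Reversal invariance of a product over pairs `i < j`. -/
lemma pairProd_rev {K : Type*} [CommMonoid K] {n : ℕ} (g : Fin n → Fin n → K) :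
    (∏ i : Fin n, ∏ j ∈ Finset.univ.filter (fun j => i < j), g (Fin.rev j) (Fin.rev i))
      = ∏ i : Fin n, ∏ j ∈ Finset.univ.filter (fun j => i < j), g i j := by
  rw [Finset.prod_sigma', Finset.prod_sigma']
  refine Finset.prod_nbij' (fun p => ⟨Fin.rev p.2, Fin.rev p.1⟩)
    (fun p => ⟨Fin.rev p.2, Fin.rev p.1⟩) ?_ ?_ ?_ ?_ ?_
  · rintro ⟨a, b⟩ hab
    simp only [Finset.mem_sigma, Finset.mem_univ, Finset.mem_filter, true_and] at hab ⊢
    exact Fin.rev_lt_rev.mpr hab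
  · rintro ⟨a, b⟩ hab
    simp only [Finset.mem_sigma, Finset.mem_univ, Finset.mem_filter, true_and] at hab ⊢
    exact Fin.rev_lt_rev.mpr hab
  · rintro ⟨a, b⟩ _; simp
  · rintro ⟨a, b⟩ _; simp
  · rintro ⟨a, b⟩ _; rfl

section Aux2

variable (n : ℕ) (k : Fin n → ℤ)


lemma strictMono_gain (hk : StrictMono k) :
    ∀ d : ℕ, ∀ a b : Fin n, (b : ℕ) = (a : ℕ) + d → k a + (d : ℤ) ≤ k b := by
  intro d
  induction d with
  | zero => intro a b h; have : a = b := Fin.ext (by omega); simp [this]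
  | succ d ih =>
    intro a b h
    have hb' : (a : ℕ) + d < n := by omega
    set b' : Fin n := ⟨(a : ℕ) + d, hb'⟩ with hb'def
    have h1 : k a + (d : ℤ) ≤ k b' := ih a b' rfl
    have h2 : k b' < k b := hk (by simp [Fin.lt_def, hb'def]; omega)
    push_cast
    omega

end Aux2

/-- Proposition 2.2(ii): for a strictly increasing integer sequence `k`,
`R*_k(x; 1,1,0) = s_{(k_n - n + 1, …, k_2 - 1, k_1)}(x) ∏_{i<j}(1 + x_i x_j)`,
as an identity in `ℚ(x_1,…,x_n)`. -/
theorem stmt6 (n : ℕ) (hn : 0 < n) (k : Fin n → ℤ) (hk : StrictMono k) :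
    Rstar n k
        (fun i => algebraMap (MvPolynomial (Fin n) ℚ)
          (FractionRing (MvPolynomial (Fin n) ℚ)) (MvPolynomial.X i)) 1 1 0
      = schur n (fun j => k j.rev - ((j.rev : ℕ) : ℤ))
          (fun i => algebraMap (MvPolynomial (Fin n) ℚ)
            (FractionRing (MvPolynomial (Fin n) ℚ)) (MvPolynomial.X i)) *
        ∏ i : Fin n, ∏ j ∈ Finset.univ.filter (fun j => i < j),
          (1 + algebraMap (MvPolynomial (Fin n) ℚ)
              (FractionRing (MvPolynomial (Fin n) ℚ)) (MvPolynomial.X i) *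
            algebraMap (MvPolynomial (Fin n) ℚ)
              (FractionRing (MvPolynomial (Fin n) ℚ)) (MvPolynomial.X j)) := by
  classical
  set F := FractionRing (MvPolynomial (Fin n) ℚ)
  set x : Fin n → F := fun i => algebraMap (MvPolynomial (Fin n) ℚ) F (MvPolynomial.X i)
    with hxdef
  -- injectivity of x
  have hx : Function.Injective x := fun a b hab =>
    MvPolynomial.X_injective (IsFractionRing.injective (MvPolynomial (Fin n) ℚ) F hab)
  -- the denominators
  set Δ : F := ∏ i : Fin n, ∏ j ∈ Finset.univ.filter (fun j => i < j), (x j - x i) with hΔdef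
  set Δ' : F := ∏ i : Fin n, ∏ j ∈ Finset.univ.filter (fun j => i < j), (x i - x j) with hΔ'def
  have hfilter : ∀ i : Fin n, Finset.univ.filter (fun j => i < j) = Finset.Ioi i := by
    intro i; ext j; simp
  have hΔ : Δ ≠ 0 := by
    rw [hΔdef]
    refine Finset.prod_ne_zero_iff.mpr fun i _ => Finset.prod_ne_zero_iff.mpr fun j hj => ?_
    simp only [Finset.mem_filter] at hj
    exact sub_ne_zero.mpr fun h => absurd (hx h) (ne_of_gt hj.2)
  -- the matrix M
  set M : Matrix (Fin n) (Fin n) F := Matrix.of fun i j => x i ^ (k j) with hMdef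
  -- sign of reversal times Δ equals Δ'
  set ε : F := ((Equiv.Perm.sign (Fin.revPerm : Equiv.Perm (Fin n)) : ℤ) : F) with hεdef
  have hε2 : ε * ε = 1 := by
    have h := Int.units_mul_self (Equiv.Perm.sign (Fin.revPerm : Equiv.Perm (Fin n)))
    have h2 := congrArg (fun u : ℤˣ => ((u : ℤ) : F)) h
    rw [hεdef, ← Int.cast_mul, ← Units.val_mul, h]; simp
  have hεΔ : ε * Δ = Δ' := by
    have h1 : ((Matrix.vandermonde x).submatrix (Fin.revPerm : Equiv.Perm (Fin n)) id).det
        = ε * (Matrix.vandermonde x).det := by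
      rw [Matrix.det_permute, hεdef]
    have h2 : (Matrix.vandermonde x).det = Δ := by
      rw [Matrix.det_vandermonde, hΔdef]
      exact Finset.prod_congr rfl fun i _ => by rw [hfilter]
    have h3 : ((Matrix.vandermonde x).submatrix (Fin.revPerm : Equiv.Perm (Fin n)) id)
        = Matrix.vandermonde (fun i => x (Fin.rev i)) := by
      ext i j; simp [Matrix.vandermonde, Matrix.submatrix]
    have h4 : (Matrix.vandermonde (fun i => x (Fin.rev i))).det = Δ' := by
      rw [Matrix.det_vandermonde, hΔ'def]
      have := pairProd_rev (n := n) (fun a b => x a - x b)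
      calc ∏ i : Fin n, ∏ j ∈ Finset.Ioi i, (x (Fin.rev j) - x (Fin.rev i))
          = ∏ i : Fin n, ∏ j ∈ Finset.univ.filter (fun j => i < j),
              (x (Fin.rev j) - x (Fin.rev i)) := by
            exact Finset.prod_congr rfl fun i _ => by rw [hfilter]
        _ = _ := this
    rw [← h4, ← h3, h1, h2]
  -- antitone
  have hanti : Antitone (fun j : Fin n => k j.rev - ((j.rev : ℕ) : ℤ)) := by
    intro a b hab
    have hrev : b.rev ≤ a.rev := Fin.rev_le_rev.mpr hab
    have := strictMono_gain n k hk ((a.rev : ℕ) - (b.rev : ℕ)) b.rev a.rev (by omega)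
    have hc : ((a.rev : ℕ) : ℤ) - ((b.rev : ℕ) : ℤ) = (((a.rev : ℕ) - (b.rev : ℕ) : ℕ) : ℤ) := by
      have : (b.rev : ℕ) ≤ (a.rev : ℕ) := hrev
      omega
    simp only
    omega
  -- schur unfolds
  have hexp : ∀ j : Fin n,
      (k j.rev - ((j.rev : ℕ) : ℤ)) + ((n - 1 - (j : ℕ) : ℕ) : ℤ) = k j.rev := by
    intro j
    have hv : (j.rev : ℕ) = n - 1 - (j : ℕ) := by
      have := j.is_lt
      simp [Fin.val_rev]; omega
    rw [← hv]; ring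
  have hN : (Matrix.of fun i j : Fin n =>
        x i ^ ((k j.rev - ((j.rev : ℕ) : ℤ)) + ((n - 1 - (j : ℕ) : ℕ) : ℤ)))
      = M.submatrix id (Fin.revPerm : Equiv.Perm (Fin n)) := by
    ext i j
    rw [hMdef]
    simp only [Matrix.of_apply, Matrix.submatrix_apply, id_eq, Fin.revPerm_apply]
    congr 1
    have := j.is_lt
    simp only [Fin.val_rev]
    omega
  have hschur : schur n (fun j => k j.rev - ((j.rev : ℕ) : ℤ)) x = M.det / Δ := by
    rw [schur, if_pos hanti]
    have : (Matrix.of fun i j : Fin n =>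
        x i ^ ((fun j => k j.rev - ((j.rev : ℕ) : ℤ)) j + ((n - 1 - (j : ℕ) : ℕ) : ℤ))).det
        = ε * M.det := by
      simp only
      rw [hN, Matrix.det_permute', hεdef]
    rw [this, ← hΔ'def, ← hεΔ]
    rw [mul_div_mul_left _ _ (by
      intro h; rw [h] at hε2; simpa using hε2)]
  -- Rstar unfolds
  have hC : ∀ σ : Equiv.Perm (Fin n),
      (∏ i : Fin n, ∏ j ∈ Finset.univ.filter (fun j => i < j),
        ((1:F) * x (σ i) * x (σ j) + 1 + 0 * x (σ i)))
      = ∏ i : Fin n, ∏ j ∈ Finset.univ.filter (fun j => i < j), (1 + x i * x j) := by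
    intro σ
    have h1 : (∏ i : Fin n, ∏ j ∈ Finset.univ.filter (fun j => i < j),
        ((1:F) * x (σ i) * x (σ j) + 1 + 0 * x (σ i)))
        = ∏ i : Fin n, ∏ j ∈ Finset.univ.filter (fun j => i < j), (1 + x (σ i) * x (σ j)) :=
      Finset.prod_congr rfl fun i _ => Finset.prod_congr rfl fun j _ => by ring
    rw [h1]
    exact pairProd_perm (fun a b => 1 + x a * x b) (fun a b => by ring) σ
  have hdet : M.det = ∑ σ : Equiv.Perm (Fin n), ((Equiv.Perm.sign σ : ℤ) : F) *
      ∏ i : Fin n, x (σ i) ^ (k i) := by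
    rw [Matrix.det_apply']
    rfl
  rw [Rstar, hschur]
  have hnum : (∑ σ : Equiv.Perm (Fin n), ((Equiv.Perm.sign σ : ℤ) : F) *
      ((∏ i : Fin n, ∏ j ∈ Finset.univ.filter (fun j => i < j),
          ((1:F) * x (σ i) * x (σ j) + 1 + 0 * x (σ i))) *
        ∏ i : Fin n, x (σ i) ^ (k i)))
      = (∏ i : Fin n, ∏ j ∈ Finset.univ.filter (fun j => i < j), (1 + x i * x j)) * M.det := by
    rw [hdet, Finset.mul_sum]
    refine Finset.sum_congr rfl fun σ _ => ?_
    rw [hC σ]; ring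
  rw [hnum]
  rw [← hΔdef]
  field_simp
  ring
end

section
/- The sum over all weakly decreasing n-tuples of nonnegative integers of modified Robbins polynomials satisfies the reciprocity ∑_{k_1 ≥ ... ≥ k_n ≥ 0} R*_{(k_1,...,k_n)}(x_1,...,x_n; 1,1,w) = (-1)^n ∏_{i=1}^{n} x_i^{-1} · ∑_{0 ≤ k_1 < ... < k_n} R*_{(k_1,...,k_n)}(x_1^{-1},...,x_n^{-1}; 1,1,w). -/
open Finset

section Aux

variable {n : ℕ}

private lemma aux_filter_Ioi (i : Fin n) :
    Finset.univ.filter (fun j => i < j) = Finset.Ioi i := by ext; simp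

private lemma aux_pairswap {M : Type*} [CommMonoid M] (f : Fin n → Fin n → M) :
    ∏ i : Fin n, ∏ j ∈ Finset.univ.filter (fun j => i < j), f i j
      = ∏ i : Fin n, ∏ j ∈ Finset.univ.filter (fun j => i < j), f (Fin.rev j) (Fin.rev i) := by
  rw [Finset.prod_sigma', Finset.prod_sigma']
  refine Finset.prod_nbij' (fun p => ⟨Fin.rev p.2, Fin.rev p.1⟩)
    (fun p => ⟨Fin.rev p.2, Fin.rev p.1⟩) ?_ ?_ ?_ ?_ ?_
  · rintro ⟨a, b⟩ h
    simp only [Finset.mem_sigma, Finset.mem_filter, Finset.mem_univ, true_and] at h ⊢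
    exact Fin.rev_lt_rev.mpr h
  · rintro ⟨a, b⟩ h
    simp only [Finset.mem_sigma, Finset.mem_filter, Finset.mem_univ, true_and] at h ⊢
    exact Fin.rev_lt_rev.mpr h
  · rintro ⟨a, b⟩ _; simp [Fin.rev_rev]
  · rintro ⟨a, b⟩ _; simp [Fin.rev_rev]
  · rintro ⟨a, b⟩ _; simp [Fin.rev_rev]

private lemma aux_count_right {M : Type*} [CommMonoid M] (g : Fin n → M) :
    ∏ i : Fin n, ∏ j ∈ Finset.univ.filter (fun j => i < j), g j
      = ∏ j : Fin n, g j ^ (j : ℕ) := by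
  rw [Finset.prod_comm' (t' := Finset.univ)
    (s' := fun j => Finset.univ.filter (fun i => i < j)) (by intro i j; simp)]
  refine Finset.prod_congr rfl fun j _ => ?_
  rw [Finset.prod_const]
  congr 1
  have : Finset.univ.filter (fun i => i < j) = Finset.Iio j := by ext; simp
  rw [this, Fin.card_Iio]

private lemma aux_count_left {M : Type*} [CommMonoid M] (g : Fin n → M) :
    ∏ i : Fin n, ∏ j ∈ Finset.univ.filter (fun j => i < j), g i
      = ∏ i : Fin n, g i ^ (n - 1 - (i : ℕ)) := by
  refine Finset.prod_congr rfl fun i _ => ?_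
  rw [Finset.prod_const, aux_filter_Ioi, Fin.card_Ioi]

private lemma aux_prod_pair_mul {M : Type*} [CommMonoid M] (y : Fin n → M) :
    ∏ i : Fin n, ∏ j ∈ Finset.univ.filter (fun j => i < j), (y i * y j)
      = (∏ i : Fin n, y i) ^ (n - 1) := by
  rw [Finset.prod_congr rfl fun (i : Fin n) _ => Finset.prod_mul_distrib,
    Finset.prod_mul_distrib, aux_count_left, aux_count_right, ← Finset.prod_mul_distrib,
    ← Finset.prod_pow]
  refine Finset.prod_congr rfl fun i _ => ?_
  rw [← pow_add]
  congr 1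
  have := i.isLt
  omega

private lemma aux_prod_le {M : Type*} [CommMonoid M] (y : Fin n → M) :
    ∏ i : Fin n, ∏ j ∈ Finset.univ.filter (fun j => j ≤ i), y j
      = ∏ j : Fin n, y j ^ (n - (j : ℕ)) := by
  rw [Finset.prod_comm' (t' := Finset.univ)
    (s' := fun j => Finset.univ.filter (fun i => j ≤ i)) (by intro i j; simp)]
  refine Finset.prod_congr rfl fun j _ => ?_
  rw [Finset.prod_const]
  congr 1
  have : Finset.univ.filter (fun i => j ≤ i) = Finset.Ici j := by ext; simp
  rw [this, Fin.card_Ici]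

private lemma aux_rev_le {M : Type*} [CommMonoid M] (a : Fin n) (h : Fin n → M) :
    ∏ j ∈ Finset.univ.filter (fun j => Fin.rev a ≤ j), h j
      = ∏ j ∈ Finset.univ.filter (fun j => j ≤ a), h (Fin.rev j) := by
  refine (Finset.prod_nbij' Fin.rev Fin.rev ?_ ?_ ?_ ?_ ?_).symm
  · intro b hb
    simp only [Finset.mem_filter, Finset.mem_univ, true_and] at hb ⊢
    exact Fin.rev_le_rev.mpr hb
  · intro b hb
    simp only [Finset.mem_filter, Finset.mem_univ, true_and] at hb ⊢
    rw [← Fin.rev_le_rev, Fin.rev_rev] at hb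
    exact hb
  · intro b _; simp [Fin.rev_rev]
  · intro b _; simp [Fin.rev_rev]
  · intro b _; rfl

private lemma aux_sign_vandermonde {F : Type*} [Field F] (v : Fin n → F)
    (τ : Equiv.Perm (Fin n)) :
    ∏ i : Fin n, ∏ j ∈ Finset.univ.filter (fun j => i < j), (v (τ j) - v (τ i))
      = ((Equiv.Perm.sign τ : ℤ) : F) *
          ∏ i : Fin n, ∏ j ∈ Finset.univ.filter (fun j => i < j), (v j - v i) := by
  have h1 : (Matrix.vandermonde v).submatrix τ id = Matrix.vandermonde (fun i => v (τ i)) := by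
    ext i j; simp [Matrix.vandermonde_apply]
  have h2 := Matrix.det_permute τ (Matrix.vandermonde v)
  rw [h1, Matrix.det_vandermonde, Matrix.det_vandermonde] at h2
  simp only [aux_filter_Ioi]
  exact h2

private lemma aux_inv_one_sub_inv {F : Type*} [Field F] (a : F) (ha : a ≠ 0) :
    (1 - a⁻¹)⁻¹ = -(a * (1 - a)⁻¹) := by
  have h1 : 1 - a⁻¹ = (a - 1) * a⁻¹ := by
    rw [sub_mul, mul_inv_cancel₀ ha, one_mul]
  rw [h1, mul_inv_rev, inv_inv, show a - 1 = -(1 - a) by ring, inv_neg]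
  ring

private lemma aux_assemble {F : Type*} [Field F] (S s e A G D px c : F)
    (hs : s * s = 1) (he : e * e = 1) (hD : D ≠ 0) (hpx : px ≠ 0) (hc : c ≠ 0) :
    S * (A * G) / D = e * px⁻¹ * ((S * s) * ((A * c⁻¹) * (e * (px * G))) / (s * (D * c⁻¹))) := by
  have hs0 : s ≠ 0 := left_ne_zero_of_mul_eq_one hs
  field_simp
  ring_nf
  linear_combination (-(S * A * G)) * he

end Aux

private theorem main_general {F : Type*} [Field F] {n : ℕ} (x : Fin n → F) (w : F)
    (hx : ∀ i, x i ≠ 0) (hxx : ∀ i j : Fin n, i ≠ j → x i ≠ x j) :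
    (∑ σ : Equiv.Perm (Fin n), ((Equiv.Perm.sign σ : ℤ) : F) *
        ((∏ i : Fin n, ∏ j ∈ Finset.univ.filter (fun j => i < j),
            (x (σ i) * x (σ j) + 1 + w * x (σ i))) *
          ∏ i : Fin n,
            (1 - ∏ j ∈ Finset.univ.filter (fun j => j ≤ i), x (σ j))⁻¹)) /
      (∏ i : Fin n, ∏ j ∈ Finset.univ.filter (fun j => i < j), (x j - x i))
    = (-1 : F) ^ n * (∏ i : Fin n, (x i)⁻¹) *
      ((∑ σ : Equiv.Perm (Fin n), ((Equiv.Perm.sign σ : ℤ) : F) *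
          ((∏ i : Fin n, ∏ j ∈ Finset.univ.filter (fun j => i < j),
              ((x (σ i))⁻¹ * (x (σ j))⁻¹ + 1 + w * (x (σ i))⁻¹)) *
            ∏ i : Fin n, ((x (σ i))⁻¹ ^ (i : ℕ) *
              (1 - ∏ j ∈ Finset.univ.filter (fun j => i ≤ j), (x (σ j))⁻¹)⁻¹))) /
        (∏ i : Fin n, ∏ j ∈ Finset.univ.filter (fun j => i < j), ((x j)⁻¹ - (x i)⁻¹))) := by
  classical
  have hpx0 : (∏ i : Fin n, x i) ≠ 0 := Finset.prod_ne_zero_iff.2 fun i _ => hx i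
  have hc0 : (∏ i : Fin n, x i) ^ (n - 1) ≠ 0 := pow_ne_zero _ hpx0
  have hD0 : (∏ i : Fin n, ∏ j ∈ Finset.univ.filter (fun j => i < j), (x j - x i)) ≠ 0 := by
    refine Finset.prod_ne_zero_iff.2 fun i _ => Finset.prod_ne_zero_iff.2 fun j hj => ?_
    rw [Finset.mem_filter] at hj
    exact sub_ne_zero.2 (hxx j i (ne_of_gt hj.2))
  set s : F := ((Equiv.Perm.sign (Fin.revPerm (n := n)) : ℤ) : F) with hsdef
  have hss : s * s = 1 := by
    rw [hsdef, ← Int.cast_mul, ← Units.val_mul, Int.units_mul_self, Units.val_one, Int.cast_one]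
  have hee : (-1 : F) ^ n * (-1 : F) ^ n = 1 := by
    rw [← pow_add, ← two_mul, pow_mul, neg_one_sq, one_pow]
  -- the relation between the two Vandermonde-type denominators
  have hDp : (∏ i : Fin n, ∏ j ∈ Finset.univ.filter (fun j => i < j), ((x j)⁻¹ - (x i)⁻¹))
      = s * ((∏ i : Fin n, ∏ j ∈ Finset.univ.filter (fun j => i < j), (x j - x i)) *
          (((∏ i : Fin n, x i) ^ (n - 1))⁻¹)) := by
    have h1 := aux_sign_vandermonde (fun i => (x i)⁻¹) (Fin.revPerm (n := n))
    have h2 : (∏ i : Fin n, ∏ j ∈ Finset.univ.filter (fun j => i < j),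
          ((x (Fin.revPerm j))⁻¹ - (x (Fin.revPerm i))⁻¹))
        = (∏ i : Fin n, ∏ j ∈ Finset.univ.filter (fun j => i < j), (x j - x i)) *
          (((∏ i : Fin n, x i) ^ (n - 1))⁻¹) := by
      have hfac : ∀ i j : Fin n, (x (Fin.rev j))⁻¹ - (x (Fin.rev i))⁻¹
          = (x (Fin.rev i) - x (Fin.rev j)) * ((x (Fin.rev i))⁻¹ * (x (Fin.rev j))⁻¹) := by
        intro i j
        rw [inv_sub_inv (hx _) (hx _), div_eq_mul_inv, mul_inv_rev]
      simp only [Fin.revPerm_apply]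
      rw [Finset.prod_congr rfl fun (i : Fin n) _ =>
        Finset.prod_congr rfl fun (j : Fin n) _ => hfac i j]
      rw [Finset.prod_congr rfl fun (i : Fin n) _ => Finset.prod_mul_distrib,
        Finset.prod_mul_distrib]
      congr 1
      · rw [aux_pairswap (f := fun i j => x (Fin.rev i) - x (Fin.rev j))]
        simp only [Fin.rev_rev]
      · rw [aux_prod_pair_mul (fun i => (x (Fin.rev i))⁻¹), Finset.prod_inv_distrib, ← inv_pow]
        congr 2
        exact Equiv.prod_comp Fin.revPerm x
    have h3 := h1.symm.trans h2
    calc (∏ i : Fin n, ∏ j ∈ Finset.univ.filter (fun j => i < j), ((x j)⁻¹ - (x i)⁻¹))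
        = s * (s * (∏ i : Fin n, ∏ j ∈ Finset.univ.filter (fun j => i < j),
            ((x j)⁻¹ - (x i)⁻¹))) := by rw [← mul_assoc, hss, one_mul]
      _ = _ := by rw [h3]
  -- reindex the sum on the right-hand side
  conv_rhs => rw [← Equiv.sum_comp (Equiv.mulRight (Fin.revPerm (n := n)))]
  simp only [Equiv.coe_mulRight]
  rw [Finset.sum_div, Finset.sum_div, Finset.mul_sum, Finset.prod_inv_distrib]
  refine Finset.sum_congr rfl fun σ _ => ?_
  have hmul : ∀ i : Fin n, (σ * Fin.revPerm : Equiv.Perm (Fin n)) (Fin.rev i) = σ i := by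
    intro i
    simp [Equiv.Perm.mul_apply]
  -- sign
  have hS : ((Equiv.Perm.sign (σ * Fin.revPerm : Equiv.Perm (Fin n)) : ℤ) : F)
      = ((Equiv.Perm.sign σ : ℤ) : F) * s := by
    rw [map_mul, Units.val_mul, Int.cast_mul, hsdef]
  -- the pairwise product
  have hA : (∏ i : Fin n, ∏ j ∈ Finset.univ.filter (fun j => i < j),
        ((x ((σ * Fin.revPerm : Equiv.Perm (Fin n)) i))⁻¹ * (x ((σ * Fin.revPerm : Equiv.Perm (Fin n)) j))⁻¹ + 1 +
          w * (x ((σ * Fin.revPerm : Equiv.Perm (Fin n)) i))⁻¹))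
      = (∏ i : Fin n, ∏ j ∈ Finset.univ.filter (fun j => i < j),
          (x (σ i) * x (σ j) + 1 + w * x (σ i))) * (((∏ i : Fin n, x i) ^ (n - 1))⁻¹) := by
    rw [aux_pairswap (f := fun i j => (x ((σ * Fin.revPerm : Equiv.Perm (Fin n)) i))⁻¹ * (x ((σ * Fin.revPerm : Equiv.Perm (Fin n)) j))⁻¹
      + 1 + w * (x ((σ * Fin.revPerm : Equiv.Perm (Fin n)) i))⁻¹)]
    simp only [hmul]
    have hfac : ∀ i j : Fin n, (x (σ j))⁻¹ * (x (σ i))⁻¹ + 1 + w * (x (σ j))⁻¹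
        = (x (σ i) * x (σ j) + 1 + w * x (σ i)) * ((x (σ i))⁻¹ * (x (σ j))⁻¹) := by
      intro i j
      have ha := hx (σ i)
      have hb := hx (σ j)
      field_simp
      ring
    rw [Finset.prod_congr rfl fun (i : Fin n) _ =>
      Finset.prod_congr rfl fun (j : Fin n) _ => hfac i j]
    rw [Finset.prod_congr rfl fun (i : Fin n) _ => Finset.prod_mul_distrib,
      Finset.prod_mul_distrib]
    congr 1
    rw [aux_prod_pair_mul (fun i => (x (σ i))⁻¹), Finset.prod_inv_distrib, ← inv_pow]
    congr 2
    exact Equiv.prod_comp σ x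
  -- the geometric factor
  have hG : (∏ i : Fin n, ((x ((σ * Fin.revPerm : Equiv.Perm (Fin n)) i))⁻¹ ^ (i : ℕ) *
        (1 - ∏ j ∈ Finset.univ.filter (fun j => i ≤ j), (x ((σ * Fin.revPerm : Equiv.Perm (Fin n)) j))⁻¹)⁻¹))
      = (-1 : F) ^ n * ((∏ i : Fin n, x i) *
          ∏ i : Fin n, (1 - ∏ j ∈ Finset.univ.filter (fun j => j ≤ i), x (σ j))⁻¹) := by
    rw [← Equiv.prod_comp (Fin.revPerm (n := n)) (fun i => (x ((σ * Fin.revPerm : Equiv.Perm (Fin n)) i))⁻¹ ^ (i : ℕ) *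
      (1 - ∏ j ∈ Finset.univ.filter (fun j => i ≤ j), (x ((σ * Fin.revPerm : Equiv.Perm (Fin n)) j))⁻¹)⁻¹)]
    simp only [Fin.revPerm_apply, hmul]
    have hQ0 : ∀ i : Fin n,
        (∏ j ∈ Finset.univ.filter (fun j => j ≤ i), x (σ j)) ≠ 0 :=
      fun i => Finset.prod_ne_zero_iff.2 fun j _ => hx (σ j)
    have hQ : ∀ i : Fin n,
        (∏ j ∈ Finset.univ.filter (fun j => Fin.rev i ≤ j), (x ((σ * Fin.revPerm : Equiv.Perm (Fin n)) j))⁻¹)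
        = (∏ j ∈ Finset.univ.filter (fun j => j ≤ i), x (σ j))⁻¹ := by
      intro i
      rw [aux_rev_le i (fun j => (x ((σ * Fin.revPerm : Equiv.Perm (Fin n)) j))⁻¹)]
      simp only [hmul]
      exact Finset.prod_inv_distrib (fun j => x (σ j))
    have hstep : ∀ i : Fin n, (x (σ i))⁻¹ ^ ((Fin.rev i : ℕ)) *
        (1 - ∏ j ∈ Finset.univ.filter (fun j => Fin.rev i ≤ j), (x ((σ * Fin.revPerm : Equiv.Perm (Fin n)) j))⁻¹)⁻¹
        = (-1 : F) * (((x (σ i))⁻¹ ^ ((Fin.rev i : ℕ)) *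
            (∏ j ∈ Finset.univ.filter (fun j => j ≤ i), x (σ j))) *
          (1 - ∏ j ∈ Finset.univ.filter (fun j => j ≤ i), x (σ j))⁻¹) := by
      intro i
      rw [hQ i, aux_inv_one_sub_inv _ (hQ0 i)]
      ring
    rw [Finset.prod_congr rfl fun (i : Fin n) _ => hstep i]
    rw [Finset.prod_mul_distrib, Finset.prod_mul_distrib, Finset.prod_const,
      Finset.card_univ, Fintype.card_fin]
    congr 2
    rw [Finset.prod_mul_distrib, aux_prod_le (fun j => x (σ j)), ← Finset.prod_mul_distrib]
    have hone : ∀ i : Fin n, (x (σ i))⁻¹ ^ ((Fin.rev i : ℕ)) * (x (σ i)) ^ (n - (i : ℕ))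
        = x (σ i) := by
      intro i
      have hlt := i.isLt
      rw [Fin.val_rev]
      have h4 : n - (i : ℕ) = (n - ((i : ℕ) + 1)) + 1 := by omega
      rw [h4, pow_succ, ← mul_assoc, ← mul_pow, inv_mul_cancel₀ (hx (σ i)), one_pow, one_mul]
    rw [Finset.prod_congr rfl fun (i : Fin n) _ => hone i]
    exact Equiv.prod_comp σ x
  rw [hS, hA, hG, hDp]
  exact aux_assemble _ s _ _ _ _ _ _ hss hee hD0 hpx0 hc0



/-- Combinatorial reciprocity:
`∑_{k_1 ≥ … ≥ k_n ≥ 0} R*_k(x;1,1,w) = (-1)^n ∏_i x_i⁻¹ ∑_{0 ≤ k_1 < … < k_n} R*_k(x⁻¹;1,1,w)`.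
Both sides are the rational functions in `ℚ(x_1,…,x_n,w)` obtained from the geometric
series evaluations
`∑_{k_1≥…≥k_n≥0} ∏ x_i^{k_i} = ∏_i (1-∏_{j≤i}x_j)⁻¹` and
`∑_{0≤k_1<…<k_n} ∏ x_i^{k_i} = ∏_i x_i^{i-1}(1-∏_{j≥i}x_j)⁻¹` inside the
antisymmetrizer defining the modified Robbins polynomials.  Here the field is
`ℚ(x_1,…,x_n,w) = Frac(ℚ[Option (Fin n)])` with `w = X none`, `x i = X (some i)`. -/
theorem stmt7 (n : ℕ) (hn : 0 < n) :
    letI K := FractionRing (MvPolynomial (Option (Fin n)) ℚ)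
    letI x : Fin n → K := fun i =>
      algebraMap (MvPolynomial (Option (Fin n)) ℚ) K (MvPolynomial.X (some i))
    letI w : K := algebraMap (MvPolynomial (Option (Fin n)) ℚ) K (MvPolynomial.X none)
    -- sum over weakly decreasing tuples, via geometric series
    (∑ σ : Equiv.Perm (Fin n), ((Equiv.Perm.sign σ : ℤ) : K) *
        ((∏ i : Fin n, ∏ j ∈ Finset.univ.filter (fun j => i < j),
            (x (σ i) * x (σ j) + 1 + w * x (σ i))) *
          ∏ i : Fin n,
            (1 - ∏ j ∈ Finset.univ.filter (fun j => j ≤ i), x (σ j))⁻¹)) /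
      (∏ i : Fin n, ∏ j ∈ Finset.univ.filter (fun j => i < j), (x j - x i))
    = (-1 : K) ^ n * (∏ i : Fin n, (x i)⁻¹) *
      -- sum over strictly increasing tuples in the variables x_i⁻¹, via geometric series
      ((∑ σ : Equiv.Perm (Fin n), ((Equiv.Perm.sign σ : ℤ) : K) *
          ((∏ i : Fin n, ∏ j ∈ Finset.univ.filter (fun j => i < j),
              ((x (σ i))⁻¹ * (x (σ j))⁻¹ + 1 + w * (x (σ i))⁻¹)) *
            ∏ i : Fin n, ((x (σ i))⁻¹ ^ (i : ℕ) *
              (1 - ∏ j ∈ Finset.univ.filter (fun j => i ≤ j), (x (σ j))⁻¹)⁻¹))) /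
        (∏ i : Fin n, ∏ j ∈ Finset.univ.filter (fun j => i < j), ((x j)⁻¹ - (x i)⁻¹))) := by
  have hinj : Function.Injective (algebraMap (MvPolynomial (Option (Fin n)) ℚ)
      (FractionRing (MvPolynomial (Option (Fin n)) ℚ))) :=
    IsFractionRing.injective _ _
  exact main_general
    (fun i => algebraMap (MvPolynomial (Option (Fin n)) ℚ)
      (FractionRing (MvPolynomial (Option (Fin n)) ℚ)) (MvPolynomial.X (some i)))
    (algebraMap (MvPolynomial (Option (Fin n)) ℚ)
      (FractionRing (MvPolynomial (Option (Fin n)) ℚ)) (MvPolynomial.X none))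
    (fun i h => MvPolynomial.X_ne_zero (R := ℚ) (some i) (hinj (h.trans (map_zero _).symm)))
    (fun i j hij h => hij (Option.some_injective _ (MvPolynomial.X_injective (hinj h))))
end

section
/- Let n be even and let f(x,y), h(x), k(x) be formal power series with f antisymmetric (f(x,y) = -f(y,x)). Then pf_{0 ≤ i < j ≤ n-1}([u^i v^j] k(u)k(v) f(h(u)u, h(v)v)) = k(0)^n h(0)^{n(n-1)/2} · pf_{0 ≤ i < j ≤ n-1}([u^i v^j] f(u,v)), where [u^i v^j] denotes coefficient extraction and pf denotes the Pfaffian of the n×n skew-symmetric matrix determined by the given upper-triangular entries. -/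
set_option maxHeartbeats 1000000

open Finset Equiv Matrix

/-- The Pfaffian of a `2m × 2m` matrix (intended to be skew-symmetric), via the
permutation-sum formula `pf(A) = (1/(2^m m!)) ∑_σ sgn(σ) ∏_i A(σ(2i-1), σ(2i))`,
which agrees with the matching-sum definition over a field of characteristic zero. -/
noncomputable def pfaffian {K : Type*} [Field K] {m : ℕ}
    (A : Matrix (Fin (2 * m)) (Fin (2 * m)) K) : K :=
  (∑ σ : Equiv.Perm (Fin (2 * m)), ((Equiv.Perm.sign σ : ℤ) : K) *
      ∏ i : Fin m, A (σ ⟨2 * i.val, by omega⟩) (σ ⟨2 * i.val + 1, by omega⟩)) /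
    ((2 ^ m * Nat.factorial m : ℕ) : K)

/-- The skew-symmetric completion of a triangular array `a i j` (`i < j`), as an
`N × N` matrix. -/
def skewOf {K : Type*} [Field K] {N : ℕ} (a : ℕ → ℕ → K) : Matrix (Fin N) (Fin N) K :=
  fun i j =>
    if (i : ℕ) < (j : ℕ) then a i j
    else if (j : ℕ) < (i : ℕ) then -(a j i) else 0

section Aux

lemma BFK.detlike {n : ℕ} (M : Matrix (Fin n) (Fin n) ℚ) (τ : Fin n → Fin n) :
    ∑ σ : Perm (Fin n), ((Perm.sign σ : ℤ) : ℚ) * ∏ j, M (σ j) (τ j)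
      = (if h : Function.Bijective τ then ((Perm.sign (Equiv.ofBijective τ h) : ℤ) : ℚ) else 0)
        * M.det := by
  have key : ∑ σ : Perm (Fin n), ((Perm.sign σ : ℤ) : ℚ) * ∏ j, M (σ j) (τ j)
      = (M.submatrix id τ).det := by
    rw [Matrix.det_apply]
    congr 1
  rw [key]
  split_ifs with hb
  · have h2 : (M.submatrix id τ) = M.submatrix id ⇑(Equiv.ofBijective τ hb) := rfl
    rw [h2, Matrix.det_permute']
  · have hinj : ¬ Function.Injective τ := fun hi => hb (Finite.injective_iff_bijective.mp hi)
    simp only [Function.Injective, not_forall] at hinj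
    obtain ⟨a, b, hab, hne⟩ := hinj
    rw [Matrix.det_zero_of_column_eq hne (fun i => by simp [Matrix.submatrix_apply, hab]),
      zero_mul]

def BFK.pairFun {m : ℕ} (g : Fin m → Fin (2*m) × Fin (2*m)) : Fin (2*m) → Fin (2*m) :=
  fun j => if h : j.val % 2 = 0 then (g ⟨j.val/2, by omega⟩).1 else (g ⟨j.val/2, by omega⟩).2

open BFK in
lemma BFK.pairFun_even {m : ℕ} (g : Fin m → Fin (2*m) × Fin (2*m)) (i : Fin m) :
    pairFun g ⟨2*i.val, by omega⟩ = (g i).1 := by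
  simp only [pairFun]
  rw [dif_pos (show (2*i.val) % 2 = 0 by omega)]
  exact congrArg (fun t => (g t).1) (Fin.ext (show (2*i.val)/2 = i.val by omega))

open BFK in
lemma BFK.pairFun_odd {m : ℕ} (g : Fin m → Fin (2*m) × Fin (2*m)) (i : Fin m) :
    pairFun g ⟨2*i.val+1, by omega⟩ = (g i).2 := by
  simp only [pairFun]
  rw [dif_neg (show ¬((2*i.val+1) % 2 = 0) by omega)]
  exact congrArg (fun t => (g t).2) (Fin.ext (show (2*i.val+1)/2 = i.val by omega))

def BFK.unpairFun {m : ℕ} (τ : Fin (2*m) → Fin (2*m)) : Fin m → Fin (2*m) × Fin (2*m) :=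
  fun i => (τ ⟨2*i.val, by omega⟩, τ ⟨2*i.val+1, by omega⟩)

open BFK in
lemma BFK.pairFun_bijective {m : ℕ} : Function.Bijective (pairFun (m := m)) := by
  refine Function.bijective_iff_has_inverse.mpr ⟨unpairFun, ?_, ?_⟩
  · intro g; funext i
    simp [unpairFun, pairFun_even, pairFun_odd]
  · intro τ; funext j
    rcases Nat.even_or_odd j.val with ⟨c, hc⟩ | ⟨c, hc⟩
    · have h0 : j.val % 2 = 0 := by omega
      simp only [pairFun, unpairFun, dif_pos h0]
      congr 1; exact Fin.ext (by simp; omega)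
    · have h0 : ¬ (j.val % 2 = 0) := by omega
      simp only [pairFun, unpairFun, dif_neg h0]
      congr 1; exact Fin.ext (by simp; omega)

lemma BFK.prod_pair_range (F : ℕ → ℚ) (m : ℕ) :
    ∏ j ∈ range (2*m), F j = ∏ i ∈ range m, (F (2*i) * F (2*i+1)) := by
  induction m with
  | zero => simp
  | succ n ih =>
      have h2 : 2*(n+1) = (2*n)+1+1 := by ring
      rw [h2, prod_range_succ, prod_range_succ, ih, prod_range_succ]; ring

open BFK in
lemma BFK.prod_fin_pair {m : ℕ} (F : Fin (2*m) → ℚ) :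
    ∏ j, F j = ∏ i : Fin m, (F ⟨2*i.val, by omega⟩ * F ⟨2*i.val+1, by omega⟩) := by
  set G : ℕ → ℚ := fun j => if h : j < 2*m then F ⟨j,h⟩ else 1 with hG
  have h1 : ∏ j, F j = ∏ j ∈ range (2*m), G j := by
    rw [← Fin.prod_univ_eq_prod_range G (2*m)]
    apply Finset.prod_congr rfl
    intro j _
    rw [hG]; simp [j.isLt]
  rw [h1, prod_pair_range, ← Fin.prod_univ_eq_prod_range (fun i => G (2*i) * G (2*i+1)) m]
  apply Finset.prod_congr rfl
  intro i _
  have e1 : G (2*i.val) = F ⟨2*i.val, by omega⟩ := by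
    rw [hG]; simp only [dif_pos (show 2*i.val < 2*m by omega)]
  have e2 : G (2*i.val+1) = F ⟨2*i.val+1, by omega⟩ := by
    rw [hG]; simp only [dif_pos (show 2*i.val+1 < 2*m by omega)]
  rw [e1, e2]

lemma BFK.sum_bij_perm {n : ℕ} (P : (Fin n → Fin n) → ℚ) :
    ∑ τ : Fin n → Fin n, (if h : Function.Bijective τ
        then ((Perm.sign (Equiv.ofBijective τ h) : ℤ) : ℚ) * P τ else 0)
      = ∑ σ : Perm (Fin n), ((Perm.sign σ : ℤ) : ℚ) * P ⇑σ := by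
  classical
  set F : (Fin n → Fin n) → ℚ := fun τ => if h : Function.Bijective τ
        then ((Perm.sign (Equiv.ofBijective τ h) : ℤ) : ℚ) * P τ else 0 with hF
  have himg : ∑ τ ∈ Finset.image (fun σ : Perm (Fin n) => ⇑σ) univ, F τ
      = ∑ σ : Perm (Fin n), F ⇑σ :=
    Finset.sum_image (fun a _ b _ hab => Equiv.coe_fn_injective hab)
  rw [← Finset.sum_subset (Finset.subset_univ _) (fun τ _ hτ => ?_), himg]
  · apply Finset.sum_congr rfl
    intro σ _
    have heq : Equiv.ofBijective ⇑σ σ.bijective = σ := Equiv.ext fun x => rfl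
    simp only [hF]
    rw [dif_pos σ.bijective, heq]
  · show (if h : Function.Bijective τ
        then ((Perm.sign (Equiv.ofBijective τ h) : ℤ) : ℚ) * P τ else 0) = 0
    rw [dif_neg]
    intro hb
    exact hτ (Finset.mem_image.mpr ⟨Equiv.ofBijective τ hb, Finset.mem_univ _, rfl⟩)

end Aux

open BFK in
lemma BFK.pf_mul {m : ℕ} (M A : Matrix (Fin (2*m)) (Fin (2*m)) ℚ) :
    pfaffian (M * A * Mᵀ) = M.det * pfaffian A := by
  classical
  unfold pfaffian
  rw [← mul_div_assoc]
  congr 1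
  have hentry : ∀ x y : Fin (2*m), (M*A*Mᵀ) x y
      = ∑ pq : Fin (2*m) × Fin (2*m), M x pq.1 * A pq.1 pq.2 * M y pq.2 := by
    intro x y
    rw [Fintype.sum_prod_type]
    simp only [Matrix.mul_apply, Matrix.transpose_apply, Finset.sum_mul]
    rw [Finset.sum_comm]
  calc
    ∑ σ : Perm (Fin (2*m)), ((Perm.sign σ : ℤ) : ℚ) *
        ∏ i : Fin m, (M*A*Mᵀ) (σ ⟨2*i.val, by omega⟩) (σ ⟨2*i.val+1, by omega⟩)
      = ∑ σ : Perm (Fin (2*m)), ∑ g : Fin m → Fin (2*m) × Fin (2*m),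
          ((Perm.sign σ : ℤ) : ℚ) * ∏ i : Fin m,
            (M (σ ⟨2*i.val, by omega⟩) (g i).1 * A (g i).1 (g i).2
              * M (σ ⟨2*i.val+1, by omega⟩) (g i).2) := by
        apply Finset.sum_congr rfl; intro σ _
        rw [← Finset.mul_sum]
        congr 1
        simp only [hentry]
        exact Fintype.prod_sum _
    _ = ∑ g : Fin m → Fin (2*m) × Fin (2*m),
          (∏ i : Fin m, A (g i).1 (g i).2) *
          ∑ σ : Perm (Fin (2*m)), ((Perm.sign σ : ℤ) : ℚ) *
            ∏ j, M (σ j) (pairFun g j) := by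
        rw [Finset.sum_comm]
        apply Finset.sum_congr rfl; intro g _
        rw [Finset.mul_sum]
        apply Finset.sum_congr rfl; intro σ _
        have hp : (∏ i : Fin m,
            (M (σ ⟨2*i.val, by omega⟩) (g i).1 * A (g i).1 (g i).2
              * M (σ ⟨2*i.val+1, by omega⟩) (g i).2))
          = (∏ i : Fin m, A (g i).1 (g i).2)
            * ∏ j, M (σ j) (pairFun g j) := by
          rw [prod_fin_pair (fun j => M (σ j) (pairFun g j))]
          rw [← Finset.prod_mul_distrib]
          apply Finset.prod_congr rfl; intro i _
          rw [pairFun_even, pairFun_odd]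
          ring
        rw [hp]; ring
    _ = ∑ g : Fin m → Fin (2*m) × Fin (2*m),
          (if h : Function.Bijective (pairFun g)
            then ((Perm.sign (Equiv.ofBijective (pairFun g) h) : ℤ) : ℚ) *
              ((∏ i : Fin m, A (pairFun g ⟨2*i.val, by omega⟩)
                  (pairFun g ⟨2*i.val+1, by omega⟩)) * M.det)
            else 0) := by
        apply Finset.sum_congr rfl; intro g _
        rw [detlike]
        simp only [pairFun_even, pairFun_odd]
        split_ifs <;> ring
    _ = ∑ τ : Fin (2*m) → Fin (2*m),
          (if h : Function.Bijective τ
            then ((Perm.sign (Equiv.ofBijective τ h) : ℤ) : ℚ) *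
              ((∏ i : Fin m, A (τ ⟨2*i.val, by omega⟩) (τ ⟨2*i.val+1, by omega⟩)) * M.det)
            else 0) :=
        Fintype.sum_bijective pairFun pairFun_bijective _ _ (fun g => rfl)
    _ = ∑ σ : Perm (Fin (2*m)), ((Perm.sign σ : ℤ) : ℚ) *
          ((∏ i : Fin m, A (σ ⟨2*i.val, by omega⟩) (σ ⟨2*i.val+1, by omega⟩)) * M.det) :=
        sum_bij_perm _
    _ = M.det * ∑ σ : Perm (Fin (2*m)), ((Perm.sign σ : ℤ) : ℚ) *
          ∏ i : Fin m, A (σ ⟨2*i.val, by omega⟩) (σ ⟨2*i.val+1, by omega⟩) := by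
        rw [Finset.mul_sum]
        apply Finset.sum_congr rfl; intro σ _; ring

lemma BFK.series_rw (h k : PowerSeries ℚ) (i : ℕ) :
    k * (h * PowerSeries.X) ^ i = (k * h ^ i) * PowerSeries.X ^ i := by
  rw [mul_pow]; ring

open BFK in
lemma BFK.coeff_vanish (h k : PowerSeries ℚ) {a i : ℕ} (hai : a < i) :
    PowerSeries.coeff a (k * (h * PowerSeries.X) ^ i) = 0 := by
  rw [series_rw, PowerSeries.coeff_mul_X_pow', if_neg (by omega)]

open BFK in
lemma BFK.coeff_diag (h k : PowerSeries ℚ) (i : ℕ) :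
    PowerSeries.coeff i (k * (h * PowerSeries.X) ^ i)
      = PowerSeries.constantCoeff k * (PowerSeries.constantCoeff h) ^ i := by
  rw [series_rw, PowerSeries.coeff_mul_X_pow', if_pos le_rfl]
  simp [PowerSeries.coeff_zero_eq_constantCoeff, _root_.map_mul, _root_.map_pow]

open BFK in
/-- Lemma 5.1 (BFK Theorem 14). -/
theorem stmt8 (m : ℕ) (f : ℕ → ℕ → ℚ) (hf : ∀ i j, f i j = - f j i)
    (h k : PowerSeries ℚ) :
    pfaffian (skewOf (N := 2 * m) (fun a b =>
        ∑ i ∈ Finset.range (a + 1), ∑ j ∈ Finset.range (b + 1),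
          f i j * PowerSeries.coeff a (k * (h * PowerSeries.X) ^ i) *
            PowerSeries.coeff b (k * (h * PowerSeries.X) ^ j)))
    = (PowerSeries.constantCoeff k) ^ (2 * m) *
        (PowerSeries.constantCoeff h) ^ (m * (2 * m - 1)) *
        pfaffian (skewOf (N := 2 * m) f) := by
  classical
  set Mk : Matrix (Fin (2*m)) (Fin (2*m)) ℚ :=
    fun a p => PowerSeries.coeff a.val (k * (h * PowerSeries.X) ^ p.val) with hMk
  set A : Matrix (Fin (2*m)) (Fin (2*m)) ℚ := skewOf (N := 2*m) f with hA
  -- the skew completion of f is just f (using antisymmetry)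
  have hf0 : ∀ i, f i i = 0 := fun i => by have := hf i i; linarith
  have hAeq : ∀ p q : Fin (2*m), A p q = f p.val q.val := by
    intro p q
    rw [hA]
    unfold skewOf
    rcases lt_trichotomy (p.val) (q.val) with hlt | heq | hgt
    · rw [if_pos hlt]
    · rw [if_neg (by omega), if_neg (by omega)]
      rw [heq, hf0]
    · rw [if_neg (by omega), if_pos hgt, hf q.val p.val]
      ring
  -- the entries of M A Mᵀ
  have hg : ∀ x y : Fin (2*m), (Mk * A * Mkᵀ) x y
      = ∑ p : Fin (2*m), ∑ q : Fin (2*m), f p.val q.val * Mk x p * Mk y q := by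
    intro x y
    simp only [Matrix.mul_apply, Matrix.transpose_apply, Finset.sum_mul]
    rw [Finset.sum_comm]
    apply Finset.sum_congr rfl; intro p _
    apply Finset.sum_congr rfl; intro q _
    rw [hAeq]; ring
  have hgskew : ∀ x y : Fin (2*m), (Mk * A * Mkᵀ) y x = - (Mk * A * Mkᵀ) x y := by
    intro x y
    rw [hg, hg, Finset.sum_comm, ← Finset.sum_neg_distrib]
    apply Finset.sum_congr rfl; intro q _
    rw [← Finset.sum_neg_distrib]
    apply Finset.sum_congr rfl; intro p _
    rw [hf p.val q.val]
    ring
  -- identify the matrix in the statement with Mk * A * Mkᵀ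
  have hmatch : skewOf (N := 2 * m) (fun a b =>
        ∑ i ∈ Finset.range (a + 1), ∑ j ∈ Finset.range (b + 1),
          f i j * PowerSeries.coeff a (k * (h * PowerSeries.X) ^ i) *
            PowerSeries.coeff b (k * (h * PowerSeries.X) ^ j))
      = Mk * A * Mkᵀ := by
    funext x y
    have hb : ∀ x y : Fin (2*m), (x.val : ℕ) < y.val →
        (∑ i ∈ Finset.range (x.val + 1), ∑ j ∈ Finset.range (y.val + 1),
          f i j * PowerSeries.coeff x.val (k * (h * PowerSeries.X) ^ i) *
            PowerSeries.coeff y.val (k * (h * PowerSeries.X) ^ j))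
        = (Mk * A * Mkᵀ) x y := by
      intro x y _
      rw [hg]
      have hext : ∀ x y : Fin (2*m),
          (∑ i ∈ Finset.range (x.val + 1), ∑ j ∈ Finset.range (y.val + 1),
            f i j * PowerSeries.coeff x.val (k * (h * PowerSeries.X) ^ i) *
              PowerSeries.coeff y.val (k * (h * PowerSeries.X) ^ j))
          = ∑ i ∈ Finset.range (2*m), ∑ j ∈ Finset.range (2*m),
            f i j * PowerSeries.coeff x.val (k * (h * PowerSeries.X) ^ i) *
              PowerSeries.coeff y.val (k * (h * PowerSeries.X) ^ j) := by
        intro x y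
        rw [Finset.sum_subset (Finset.range_subset_range.mpr (show x.val+1 ≤ 2*m by omega))
          (fun i _ hi => ?_)]
        · apply Finset.sum_congr rfl; intro i _
          rw [Finset.sum_subset (Finset.range_subset_range.mpr (show y.val+1 ≤ 2*m by omega))
            (fun j _ hj => ?_)]
          rw [coeff_vanish h k (show y.val < j by
            simp only [Finset.mem_range] at hj; omega), mul_zero]
        · apply Finset.sum_eq_zero; intro j _
          rw [coeff_vanish h k (show x.val < i by
            simp only [Finset.mem_range] at hi; omega)]
          ring
      rw [hext]
      rw [← Fin.sum_univ_eq_sum_range (fun i => ∑ j ∈ Finset.range (2*m),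
            f i j * PowerSeries.coeff x.val (k * (h * PowerSeries.X) ^ i) *
              PowerSeries.coeff y.val (k * (h * PowerSeries.X) ^ j)) (2*m)]
      apply Finset.sum_congr rfl; intro p _
      rw [← Fin.sum_univ_eq_sum_range (fun j =>
            f p.val j * PowerSeries.coeff x.val (k * (h * PowerSeries.X) ^ p.val) *
              PowerSeries.coeff y.val (k * (h * PowerSeries.X) ^ j)) (2*m)]
    unfold skewOf
    rcases lt_trichotomy (x.val) (y.val) with hlt | heq | hgt
    · rw [if_pos hlt]
      exact hb x y hlt
    · rw [if_neg (by omega), if_neg (by omega)]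
      have hx : x = y := Fin.ext heq
      subst hx
      have := hgskew x x
      linarith [this]
    · rw [if_neg (by omega), if_pos hgt]
      beta_reduce
      rw [hb y x hgt, hgskew y x]
  rw [hmatch, pf_mul]
  congr 1
  -- determinant of Mk
  have htri : Mk.BlockTriangular OrderDual.toDual := by
    intro i j hij
    exact coeff_vanish h k (show i.val < j.val from hij)
  rw [Matrix.det_of_lowerTriangular Mk htri]
  have hdiag : ∀ i : Fin (2*m), Mk i i
      = PowerSeries.constantCoeff k * (PowerSeries.constantCoeff h) ^ i.val :=
    fun i => coeff_diag h k i.val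
  calc ∏ i : Fin (2*m), Mk i i
      = ∏ i : Fin (2*m), (PowerSeries.constantCoeff k *
          (PowerSeries.constantCoeff h) ^ i.val) :=
        Finset.prod_congr rfl (fun i _ => hdiag i)
    _ = (PowerSeries.constantCoeff k) ^ (2*m) *
          (PowerSeries.constantCoeff h) ^ (∑ i : Fin (2*m), i.val) := by
        rw [Finset.prod_mul_distrib, Finset.prod_const, Finset.prod_pow_eq_pow_sum]
        simp
    _ = (PowerSeries.constantCoeff k) ^ (2 * m) *
          (PowerSeries.constantCoeff h) ^ (m * (2 * m - 1)) := by
        congr 1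
        congr 1
        rw [Fin.sum_univ_eq_sum_range (fun i => i) (2*m)]
        have h2 := Finset.sum_range_id_mul_two (2*m)
        have h3 : 2*m*(2*m-1) = (m*(2*m-1))*2 := by ring
        exact Nat.eq_of_mul_eq_mul_right (by norm_num) (h2.trans h3)
end

section
/- Let F(x_1,...,x_n) = ∑_{0 ≤ k_1 < ... < k_n} R*_{(k_1,...,k_n)}(x_1,...,x_n; 1,1,w). Then F satisfies the recurrence F(x_1,...,x_n) = (1 - ∏_{i=1}^{n} x_i)^{-1} ∑_{k=1}^{n} ∏_{i ≠ k} ((x_i x_k + 1 + w x_k) x_i)/(x_i - x_k) · F(x_1,...,x̂_k,...,x_n), with F(x_1) = 1/(1-x_1), where x̂_k denotes omission of x_k. -/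
noncomputable section

/-- `F(x_1,…,x_n) = asym[∏_{1≤i<j≤n}(x_i x_j + 1 + w x_i)
      ∏_{i=1}^n x_i^{i-1} (1 - ∏_{j=i}^n x_j)^{-1}] / ∏_{1≤i<j≤n}(x_j - x_i)`,
the generating rational function
`F = ∑_{0 ≤ k_1 < … < k_n} R*_{(k_1,…,k_n)}(x_1,…,x_n;1,1,w)`. -/
def Ffun {K : Type*} [Field K] (w : K) (n : ℕ) (x : Fin n → K) : K :=
  (∑ σ : Equiv.Perm (Fin n), ((Equiv.Perm.sign σ : ℤ) : K) *
      ((∏ i : Fin n, ∏ j ∈ Finset.univ.filter (fun j => i < j),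
          (x (σ i) * x (σ j) + 1 + w * x (σ i))) *
        ∏ i : Fin n, (x (σ i) ^ (i : ℕ) *
          (1 - ∏ j ∈ Finset.univ.filter (fun j => i ≤ j), x (σ j))⁻¹))) /
    ∏ i : Fin n, ∏ j ∈ Finset.univ.filter (fun j => i < j), (x j - x i)

/-- The field of rational functions `ℚ(w, x_1, x_2, …)`, with `w = X 0`, `x_i = X i`. -/
abbrev KK : Type := FractionRing (MvPolynomial ℕ ℚ)

/-- The indeterminate `x_i`. -/
def xx (i : ℕ) : KK := algebraMap (MvPolynomial ℕ ℚ) KK (MvPolynomial.X i)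

/-- The indeterminate `w`. -/
def ww : KK := algebraMap (MvPolynomial ℕ ℚ) KK (MvPolynomial.X 0)

namespace Stmt14Aux

open Finset Equiv

/-- Insert `k` at position `0`: `(ψ k τ) 0 = k`, `(ψ k τ) i.succ = k.succAbove (τ i)`. -/
def ψ {m : ℕ} (k : Fin (m+1)) (τ : Equiv.Perm (Fin m)) : Equiv.Perm (Fin (m+1)) :=
  (finSuccEquiv m).trans ((Equiv.optionCongr τ).trans (finSuccEquiv' k).symm)

@[simp] lemma ψ_zero {m : ℕ} (k : Fin (m+1)) (τ : Equiv.Perm (Fin m)) : ψ k τ 0 = k := by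
  simp [ψ]

@[simp] lemma ψ_succ {m : ℕ} (k : Fin (m+1)) (τ : Equiv.Perm (Fin m)) (i : Fin m) :
    ψ k τ i.succ = k.succAbove (τ i) := by
  simp [ψ]

lemma ψ_mul {m : ℕ} (k : Fin (m+1)) (τ : Equiv.Perm (Fin m)) :
    ψ k τ = ψ k 1 * ψ 0 τ := by
  ext1 x
  refine Fin.cases ?_ ?_ x <;> simp [Equiv.Perm.mul_apply, Fin.succAbove_zero]

lemma ψ_one {m : ℕ} (k : Fin (m+1)) : ψ k (1 : Equiv.Perm (Fin m)) = (Fin.cycleRange k)⁻¹ := by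
  have h : Fin.cycleRange k * ψ k (1 : Equiv.Perm (Fin m)) = 1 := by
    ext1 x
    refine Fin.cases ?_ ?_ x <;>
      simp [Equiv.Perm.mul_apply, Fin.cycleRange_self, Fin.cycleRange_succAbove]
  exact eq_inv_of_mul_eq_one_right h

lemma ψ_zero_perm {m : ℕ} (τ : Equiv.Perm (Fin m)) :
    ψ (0 : Fin (m+1)) τ = Equiv.Perm.decomposeFin.symm (0, τ) := by
  ext1 x
  refine Fin.cases ?_ ?_ x <;>
    simp [Equiv.Perm.decomposeFin_symm_apply_zero, Equiv.Perm.decomposeFin_symm_apply_succ,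
      Fin.succAbove_zero]

lemma sign_ψ {m : ℕ} (k : Fin (m+1)) (τ : Equiv.Perm (Fin m)) :
    Equiv.Perm.sign (ψ k τ) = (-1) ^ (k : ℕ) * Equiv.Perm.sign τ := by
  rw [ψ_mul, map_mul, ψ_one, ψ_zero_perm, map_inv, Fin.sign_cycleRange]
  simp

lemma ψ_bijective {m : ℕ} :
    Function.Bijective (fun p : Fin (m+1) × Equiv.Perm (Fin m) => ψ p.1 p.2) := by
  rw [Fintype.bijective_iff_injective_and_card]
  constructor
  · rintro ⟨k, τ⟩ ⟨k', τ'⟩ h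
    simp only at h
    have hk : k = k' := by
      have := congrArg (fun σ : Equiv.Perm (Fin (m+1)) => σ 0) h
      simpa using this
    subst hk
    refine Prod.ext rfl ?_
    ext1 i
    have := congrArg (fun σ : Equiv.Perm (Fin (m+1)) => σ i.succ) h
    simp only [ψ_succ] at this
    exact Fin.succAbove_right_injective this
  · simp [Fintype.card_perm, Nat.factorial_succ]

lemma prod_filter_zero_lt {K : Type*} [CommMonoid K] {m : ℕ} (f : Fin (m+1) → K) :
    ∏ j ∈ univ.filter (fun j => (0 : Fin (m+1)) < j), f j = ∏ t : Fin m, f t.succ := by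
  rw [Finset.prod_filter, Fin.prod_univ_succ]
  simp [Fin.succ_pos]

lemma prod_filter_succ_lt {K : Type*} [CommMonoid K] {m : ℕ} (i : Fin m) (f : Fin (m+1) → K) :
    ∏ j ∈ univ.filter (fun j => i.succ < j), f j
      = ∏ t ∈ univ.filter (fun t => i < t), f t.succ := by
  rw [Finset.prod_filter, Finset.prod_filter, Fin.prod_univ_succ]
  simp [Fin.succ_lt_succ_iff, (Fin.succ_pos i).not_gt]

lemma prod_filter_succ_le {K : Type*} [CommMonoid K] {m : ℕ} (i : Fin m) (f : Fin (m+1) → K) :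
    ∏ j ∈ univ.filter (fun j => i.succ ≤ j), f j
      = ∏ t ∈ univ.filter (fun t => i ≤ t), f t.succ := by
  rw [Finset.prod_filter, Finset.prod_filter, Fin.prod_univ_succ]
  simp [Fin.succ_le_succ_iff, (Fin.succ_pos i).not_ge]

lemma prod_erase_eq {K : Type*} [CommMonoid K] {m : ℕ} (k : Fin (m+1)) (f : Fin (m+1) → K) :
    ∏ i ∈ univ.erase k, f i = ∏ t : Fin m, f (k.succAbove t) := by
  refine (Finset.prod_bij (fun t _ => k.succAbove t) ?_ ?_ ?_ ?_).symm
  · intro t _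
    simp [Fin.succAbove_ne]
  · intro a _ b _ h
    exact Fin.succAbove_right_injective h
  · intro i hi
    obtain ⟨t, ht⟩ := Fin.exists_succAbove_eq (Finset.ne_of_mem_erase hi)
    exact ⟨t, Finset.mem_univ t, ht⟩
  · intro t _
    rfl

lemma card_filter_succAbove_lt {m : ℕ} (k : Fin (m+1)) :
    (univ.filter (fun t : Fin m => k.succAbove t < k)).card = (k : ℕ) := by
  have h1 : (univ.filter (fun t : Fin m => k.succAbove t < k))
      = univ.filter (fun t : Fin m => (t : ℕ) < (k : ℕ)) := by
    refine Finset.filter_congr fun t _ => ?_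
    rw [Fin.succAbove_lt_iff_castSucc_lt]
    exact Fin.lt_iff_val_lt_val.trans Iff.rfl
  rw [h1]
  have h2 : (univ.filter (fun t : Fin m => (t : ℕ) < (k : ℕ))).card
      = ((Finset.range m).filter (fun t => t < (k : ℕ))).card := by
    refine Finset.card_bij (fun t _ => (t : ℕ)) ?_ ?_ ?_
    · intro t ht
      simp only [Finset.mem_filter, Finset.mem_univ, true_and] at ht
      simp only [mem_filter, mem_range]
      exact ⟨t.isLt, ht⟩
    · intro a _ b _ h
      exact Fin.val_injective h
    · intro j hj
      simp only [mem_filter, mem_range] at hj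
      exact ⟨⟨j, hj.1⟩, by simp [hj.2], rfl⟩
  rw [h2]
  have h3 : (Finset.range m).filter (fun t => t < (k : ℕ)) = Finset.range (k : ℕ) := by
    ext j
    simp only [mem_filter, mem_range]
    constructor
    · exact fun h => h.2
    · exact fun h => ⟨lt_of_lt_of_le h (Nat.lt_succ_iff.mp k.isLt), h⟩
  rw [h3, Finset.card_range]

variable {K : Type*} [Field K]

/-- The Vandermonde-type denominator. -/
def vand (n : ℕ) (x : Fin n → K) : K :=
  ∏ i : Fin n, ∏ j ∈ univ.filter (fun j => i < j), (x j - x i)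

lemma vand_factor {m : ℕ} (k : Fin (m+1)) (x : Fin (m+1) → K) :
    vand (m+1) x
      = (-1) ^ (k : ℕ) * (∏ i ∈ univ.erase k, (x i - x k)) * vand m (x ∘ k.succAbove) := by
  classical
  have hif : vand (m+1) x
      = ∏ i : Fin (m+1), ∏ j : Fin (m+1), (if i < j then x j - x i else 1) := by
    unfold vand
    refine Finset.prod_congr rfl fun i _ => ?_
    rw [Finset.prod_filter]
  rw [hif]
  rw [Fin.prod_univ_succAbove (fun i => ∏ j : Fin (m+1), (if i < j then x j - x i else 1)) k]
  have hk : (∏ j : Fin (m+1), if k < j then x j - x k else 1)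
      = ∏ t : Fin m, (if k < k.succAbove t then x (k.succAbove t) - x k else 1) := by
    rw [Fin.prod_univ_succAbove (fun j => if k < j then x j - x k else 1) k]
    simp
  have hin : ∀ t : Fin m, (∏ j : Fin (m+1), if k.succAbove t < j then x j - x (k.succAbove t) else 1)
      = (if k.succAbove t < k then x k - x (k.succAbove t) else 1) *
        ∏ s : Fin m, (if k.succAbove t < k.succAbove s then x (k.succAbove s) - x (k.succAbove t) else 1) := by
    intro t
    rw [Fin.prod_univ_succAbove (fun j => if k.succAbove t < j then x j - x (k.succAbove t) else 1) k]
  rw [hk]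
  simp only [hin]
  rw [Finset.prod_mul_distrib]
  have hvm : (∏ t : Fin m, ∏ s : Fin m,
        (if k.succAbove t < k.succAbove s then x (k.succAbove s) - x (k.succAbove t) else 1))
      = vand m (x ∘ k.succAbove) := by
    unfold vand
    refine Finset.prod_congr rfl fun t _ => ?_
    rw [Finset.prod_filter]
    simp only [Fin.succAbove_lt_succAbove_iff, Function.comp_apply]
  rw [hvm]
  have hmerge : (∏ t : Fin m, (if k < k.succAbove t then x (k.succAbove t) - x k else 1)) *
        (∏ t : Fin m, (if k.succAbove t < k then x k - x (k.succAbove t) else 1))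
      = (-1) ^ (k : ℕ) * ∏ i ∈ univ.erase k, (x i - x k) := by
    rw [← Finset.prod_mul_distrib]
    have : ∀ t : Fin m,
        (if k < k.succAbove t then x (k.succAbove t) - x k else 1) *
          (if k.succAbove t < k then x k - x (k.succAbove t) else 1)
        = (if k.succAbove t < k then (-1 : K) else 1) * (x (k.succAbove t) - x k) := by
      intro t
      rcases lt_trichotomy (k.succAbove t) k with h | h | h
      · rw [if_neg (asymm h), if_pos h, if_pos h]
        ring
      · exact absurd h (Fin.succAbove_ne k t)
      · rw [if_pos h, if_neg (asymm h), if_neg (asymm h)]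
        ring
    rw [Finset.prod_congr rfl fun t _ => this t, Finset.prod_mul_distrib]
    congr 1
    · rw [Finset.prod_ite, Finset.prod_const, Finset.prod_const, one_pow, mul_one,
        card_filter_succAbove_lt]
    · exact (prod_erase_eq k (fun i => x i - x k)).symm
  rw [← mul_assoc, hmerge]

lemma term_eq {m : ℕ} (w : K) (x : Fin (m+1) → K) (k : Fin (m+1)) (τ : Equiv.Perm (Fin m)) :
    ((Equiv.Perm.sign (ψ k τ) : ℤ) : K) *
      ((∏ i : Fin (m+1), ∏ j ∈ Finset.univ.filter (fun j => i < j),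
          (x (ψ k τ i) * x (ψ k τ j) + 1 + w * x (ψ k τ i))) *
        ∏ i : Fin (m+1), (x (ψ k τ i) ^ (i : ℕ) *
          (1 - ∏ j ∈ Finset.univ.filter (fun j => i ≤ j), x (ψ k τ j))⁻¹))
    = ((-1 : K) ^ (k : ℕ) * (∏ i ∈ Finset.univ.erase k, ((x k * x i + 1 + w * x k) * x i))
        * (1 - ∏ i : Fin (m+1), x i)⁻¹) *
      (((Equiv.Perm.sign τ : ℤ) : K) *
        ((∏ i : Fin m, ∏ j ∈ Finset.univ.filter (fun j => i < j),
            ((x ∘ k.succAbove) (τ i) * (x ∘ k.succAbove) (τ j)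
              + 1 + w * (x ∘ k.succAbove) (τ i))) *
          ∏ i : Fin m, ((x ∘ k.succAbove) (τ i) ^ (i : ℕ) *
            (1 - ∏ j ∈ Finset.univ.filter (fun j => i ≤ j),
              (x ∘ k.succAbove) (τ j))⁻¹))) := by
  set y : Fin m → K := x ∘ k.succAbove with hy
  have hsign : ((Equiv.Perm.sign (ψ k τ) : ℤ) : K)
      = (-1) ^ (k : ℕ) * ((Equiv.Perm.sign τ : ℤ) : K) := by
    rw [sign_ψ]
    push_cast
    ring
  have hA : (∏ i : Fin (m+1), ∏ j ∈ Finset.univ.filter (fun j => i < j),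
        (x (ψ k τ i) * x (ψ k τ j) + 1 + w * x (ψ k τ i)))
      = (∏ i ∈ Finset.univ.erase k, (x k * x i + 1 + w * x k)) *
        ∏ i : Fin m, ∏ j ∈ Finset.univ.filter (fun j => i < j),
          (y (τ i) * y (τ j) + 1 + w * y (τ i)) := by
    rw [Fin.prod_univ_succ]
    congr 1
    · rw [prod_filter_zero_lt (fun j => x (ψ k τ 0) * x (ψ k τ j) + 1 + w * x (ψ k τ 0))]
      simp only [ψ_zero, ψ_succ]
      rw [show (∏ t : Fin m, (x k * x (k.succAbove (τ t)) + 1 + w * x k))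
          = ∏ t : Fin m, (x k * y (τ t) + 1 + w * x k) from rfl]
      rw [Equiv.prod_comp τ (fun t => x k * y t + 1 + w * x k)]
      rw [prod_erase_eq k (fun i => x k * x i + 1 + w * x k)]
      rfl
    · refine Finset.prod_congr rfl fun t _ => ?_
      rw [prod_filter_succ_lt t (fun j => x (ψ k τ t.succ) * x (ψ k τ j) + 1 + w * x (ψ k τ t.succ))]
      simp only [ψ_succ]
      rfl
  have hB : (∏ i : Fin (m+1), (x (ψ k τ i) ^ (i : ℕ) *
        (1 - ∏ j ∈ Finset.univ.filter (fun j => i ≤ j), x (ψ k τ j))⁻¹))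
      = (1 - ∏ i : Fin (m+1), x i)⁻¹ * ((∏ i ∈ Finset.univ.erase k, x i) *
        ∏ i : Fin m, (y (τ i) ^ (i : ℕ) *
          (1 - ∏ j ∈ Finset.univ.filter (fun j => i ≤ j), y (τ j))⁻¹)) := by
    rw [Fin.prod_univ_succ]
    have h0 : (x (ψ k τ 0) ^ ((0 : Fin (m+1)) : ℕ) *
        (1 - ∏ j ∈ Finset.univ.filter (fun j => (0 : Fin (m+1)) ≤ j), x (ψ k τ j))⁻¹)
        = (1 - ∏ i : Fin (m+1), x i)⁻¹ := by
      have : (Finset.univ.filter (fun j => (0 : Fin (m+1)) ≤ j)) = Finset.univ := by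
        simp [Fin.zero_le]
      rw [this]
      simp only [Fin.val_zero, pow_zero, one_mul]
      rw [Equiv.prod_comp (ψ k τ) x]
    rw [h0]
    have hsucc : ∀ t : Fin m, (x (ψ k τ t.succ) ^ ((t.succ : Fin (m+1)) : ℕ) *
        (1 - ∏ j ∈ Finset.univ.filter (fun j => t.succ ≤ j), x (ψ k τ j))⁻¹)
        = y (τ t) * (y (τ t) ^ (t : ℕ) *
          (1 - ∏ s ∈ Finset.univ.filter (fun s => t ≤ s), y (τ s))⁻¹) := by
      intro t
      rw [prod_filter_succ_le t (fun j => x (ψ k τ j))]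
      simp only [ψ_succ, Fin.val_succ]
      show y (τ t) ^ ((t : ℕ) + 1) *
        (1 - ∏ s ∈ Finset.univ.filter (fun s => t ≤ s), y (τ s))⁻¹ = _
      rw [pow_succ]
      ring
    rw [Finset.prod_congr rfl fun t _ => hsucc t, Finset.prod_mul_distrib,
      Equiv.prod_comp τ y,
      show (∏ i : Fin m, y i) = ∏ i ∈ Finset.univ.erase k, x i from (prod_erase_eq k x).symm]
  rw [hsign, hA, hB,
    show (∏ i ∈ Finset.univ.erase k, ((x k * x i + 1 + w * x k) * x i))
      = (∏ i ∈ Finset.univ.erase k, (x k * x i + 1 + w * x k)) * ∏ i ∈ Finset.univ.erase k, x i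
      from Finset.prod_mul_distrib]
  ring

lemma vand_ne_zero {n : ℕ} (z : Fin n → K) (hz : Function.Injective z) :
    vand n z ≠ 0 := by
  unfold vand
  rw [Finset.prod_ne_zero_iff]
  intro i _
  rw [Finset.prod_ne_zero_iff]
  intro j hj
  have hij : i < j := (Finset.mem_filter.mp hj).2
  exact sub_ne_zero.mpr fun h => absurd (hz h) hij.ne'

theorem Ffun_rec (w : K) (m : ℕ) (x : Fin (m+1) → K) (hx : Function.Injective x) :
    Ffun w (m+1) x = (1 - ∏ i : Fin (m+1), x i)⁻¹ *
      ∑ k : Fin (m+1),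
        (∏ i ∈ Finset.univ.erase k,
          ((x i * x k + 1 + w * x k) * x i) / (x i - x k)) * Ffun w m (x ∘ k.succAbove) := by
  classical
  have hyinj : ∀ k : Fin (m+1), Function.Injective (x ∘ k.succAbove) :=
    fun k => hx.comp Fin.succAbove_right_injective
  have hE : ∀ k : Fin (m+1), (∏ i ∈ univ.erase k, (x i - x k)) ≠ 0 := by
    intro k
    rw [Finset.prod_ne_zero_iff]
    intro i hi
    exact sub_ne_zero.mpr fun h => (Finset.mem_erase.mp hi).1 (hx h)
  have hbij := Fintype.sum_bijective
      (fun p : Fin (m+1) × Equiv.Perm (Fin m) => ψ p.1 p.2) ψ_bijective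
      (fun p : Fin (m+1) × Equiv.Perm (Fin m) =>
        ((Equiv.Perm.sign (ψ p.1 p.2) : ℤ) : K) *
          ((∏ i : Fin (m+1), ∏ j ∈ Finset.univ.filter (fun j => i < j),
              (x (ψ p.1 p.2 i) * x (ψ p.1 p.2 j) + 1 + w * x (ψ p.1 p.2 i))) *
            ∏ i : Fin (m+1), (x (ψ p.1 p.2 i) ^ (i : ℕ) *
              (1 - ∏ j ∈ Finset.univ.filter (fun j => i ≤ j), x (ψ p.1 p.2 j))⁻¹)))
      (fun σ : Equiv.Perm (Fin (m+1)) =>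
        ((Equiv.Perm.sign σ : ℤ) : K) *
          ((∏ i : Fin (m+1), ∏ j ∈ Finset.univ.filter (fun j => i < j),
              (x (σ i) * x (σ j) + 1 + w * x (σ i))) *
            ∏ i : Fin (m+1), (x (σ i) ^ (i : ℕ) *
              (1 - ∏ j ∈ Finset.univ.filter (fun j => i ≤ j), x (σ j))⁻¹)))
      (fun p => rfl)
  rw [show Ffun w (m+1) x
      = (∑ σ : Equiv.Perm (Fin (m+1)),
          ((Equiv.Perm.sign σ : ℤ) : K) *
            ((∏ i : Fin (m+1), ∏ j ∈ Finset.univ.filter (fun j => i < j),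
                (x (σ i) * x (σ j) + 1 + w * x (σ i))) *
              ∏ i : Fin (m+1), (x (σ i) ^ (i : ℕ) *
                (1 - ∏ j ∈ Finset.univ.filter (fun j => i ≤ j), x (σ j))⁻¹))) /
        vand (m+1) x from rfl]
  rw [← hbij, Fintype.sum_prod_type]
  have hterm : ∀ k : Fin (m+1),
      (∑ τ : Equiv.Perm (Fin m),
        ((Equiv.Perm.sign (ψ k τ) : ℤ) : K) *
          ((∏ i : Fin (m+1), ∏ j ∈ Finset.univ.filter (fun j => i < j),
              (x (ψ k τ i) * x (ψ k τ j) + 1 + w * x (ψ k τ i))) *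
            ∏ i : Fin (m+1), (x (ψ k τ i) ^ (i : ℕ) *
              (1 - ∏ j ∈ Finset.univ.filter (fun j => i ≤ j), x (ψ k τ j))⁻¹)))
      = ((-1 : K) ^ (k : ℕ)
          * (∏ i ∈ Finset.univ.erase k, ((x k * x i + 1 + w * x k) * x i))
          * (1 - ∏ i : Fin (m+1), x i)⁻¹)
          * (Ffun w m (x ∘ k.succAbove) * vand m (x ∘ k.succAbove)) := by
    intro k
    rw [Finset.sum_congr rfl (fun τ _ => term_eq w x k τ), ← Finset.mul_sum]
    congr 1
    rw [show Ffun w m (x ∘ k.succAbove)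
        = (∑ τ : Equiv.Perm (Fin m),
            ((Equiv.Perm.sign τ : ℤ) : K) *
              ((∏ i : Fin m, ∏ j ∈ Finset.univ.filter (fun j => i < j),
                  ((x ∘ k.succAbove) (τ i) * (x ∘ k.succAbove) (τ j)
                    + 1 + w * (x ∘ k.succAbove) (τ i))) *
                ∏ i : Fin m, ((x ∘ k.succAbove) (τ i) ^ (i : ℕ) *
                  (1 - ∏ j ∈ Finset.univ.filter (fun j => i ≤ j),
                    (x ∘ k.succAbove) (τ j))⁻¹))) /
          vand m (x ∘ k.succAbove) from rfl]
    rw [div_mul_cancel₀ _ (vand_ne_zero _ (hyinj k))]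
  rw [Finset.sum_congr rfl (fun k _ => hterm k), Finset.sum_div, Finset.mul_sum]
  refine Finset.sum_congr rfl fun k _ => ?_
  rw [vand_factor k x]
  have hprod : (∏ i ∈ Finset.univ.erase k, ((x i * x k + 1 + w * x k) * x i) / (x i - x k))
      = (∏ i ∈ Finset.univ.erase k, ((x k * x i + 1 + w * x k) * x i))
        / ∏ i ∈ Finset.univ.erase k, (x i - x k) := by
    rw [Finset.prod_div_distrib]
    congr 1
    exact Finset.prod_congr rfl fun i _ => by ring
  rw [hprod]
  have hV := vand_ne_zero _ (hyinj k)
  have hEk := hE k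
  have hden : ((-1 : K) ^ (k : ℕ) * (∏ i ∈ univ.erase k, (x i - x k))
      * vand m (x ∘ k.succAbove)) ≠ 0 :=
    mul_ne_zero (mul_ne_zero (pow_ne_zero _ (neg_ne_zero.mpr one_ne_zero)) hEk) hV
  rw [div_eq_iff hden]
  have hc : (∏ i ∈ Finset.univ.erase k, ((x k * x i + 1 + w * x k) * x i))
      / (∏ i ∈ Finset.univ.erase k, (x i - x k)) * (∏ i ∈ Finset.univ.erase k, (x i - x k))
      = ∏ i ∈ Finset.univ.erase k, ((x k * x i + 1 + w * x k) * x i) :=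
    div_mul_cancel₀ _ hEk
  linear_combination (-((-1 : K) ^ (k : ℕ) * (1 - ∏ i : Fin (m+1), x i)⁻¹
    * Ffun w m (x ∘ k.succAbove) * vand m (x ∘ k.succAbove))) * hc

lemma Ffun_one (w : K) (y : K) : Ffun w 1 ![y] = (1 - y)⁻¹ := by
  rw [Ffun]
  rw [Finset.sum_eq_single_of_mem 1 (Finset.mem_univ 1)
    (fun b _ hb => absurd (Subsingleton.elim b 1) hb)]
  have h1 : Finset.filter (fun j : Fin 1 => (0 : Fin 1) < j) ({0} : Finset (Fin 1)) = ∅ := by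
    decide
  have h2 : Finset.univ.filter (fun j : Fin 1 => (0 : Fin 1) ≤ j) = Finset.univ := by decide
  simp [Fin.prod_univ_succ, h1, h2]

end Stmt14Aux

/-- The recurrence for `F(x_1,…,x_n) = ∑_{0≤k_1<…<k_n} R*_k(x;1,1,w)` (here `n = m+1`):
`F(x_1,…,x_n) = (1 - ∏ x_i)⁻¹ ∑_k ∏_{i≠k} ((x_i x_k + 1 + w x_k) x_i)/(x_i - x_k)
  · F(x_1,…,x̂_k,…,x_n)`, together with the initial condition `F(x_1) = 1/(1-x_1)`. -/
theorem stmt14 (m : ℕ) :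
    (Ffun ww (m + 1) (fun i => xx ((i : ℕ) + 1))
      = (1 - ∏ i : Fin (m + 1), xx ((i : ℕ) + 1))⁻¹ *
        ∑ k : Fin (m + 1),
          (∏ i ∈ Finset.univ.erase k,
            ((xx ((i : ℕ) + 1) * xx ((k : ℕ) + 1) + 1 + ww * xx ((k : ℕ) + 1)) *
                xx ((i : ℕ) + 1)) /
              (xx ((i : ℕ) + 1) - xx ((k : ℕ) + 1))) *
          Ffun ww m ((fun i : Fin (m + 1) => xx ((i : ℕ) + 1)) ∘ k.succAbove))
    ∧ ∀ y : KK, Ffun ww 1 ![y] = (1 - y)⁻¹ := by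
  constructor
  · have hx : Function.Injective (fun i : Fin (m+1) => xx ((i : ℕ) + 1)) := by
      intro i j h
      simp only [xx] at h
      have h2 := IsFractionRing.injective (MvPolynomial ℕ ℚ) KK h
      have h3 := MvPolynomial.X_injective h2
      exact Fin.val_injective (Nat.succ_injective h3)
    exact Stmt14Aux.Ffun_rec ww m (fun i : Fin (m+1) => xx ((i : ℕ) + 1)) hx
  · intro y
    exact Stmt14Aux.Ffun_one ww y

end
end

section
/- Define F̃(x_1,...,x_n) = ∏_{i=1}^n (1-x_i) ∏_{1≤i<j≤n} (1 - x_i x_j) · F(x_1,...,x_n), where F(x_1,...,x_n) = asym_{x_1,...,x_n}[∏_{1≤i<j≤n}(x_i x_j + 1 + w x_i) ∏_{i=1}^n x_i^{i-1}(1 - ∏_{j=i}^n x_j)^{-1}] / ∏_{1≤i<j≤n}(x_j - x_i). Then for n > 1, F̃(x_1,...,x_n)|_{x_n = 1} = ∏_{k=1}^{n-1} (1 + x_k + w x_k) · F̃(x_1,...,x_{n-1}). -/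
noncomputable section

/-- `F̃(x_1,…,x_n) = ∏_i (1-x_i) ∏_{i<j} (1 - x_i x_j) · F(x_1,…,x_n)`. -/
def Ftilde {K : Type*} [Field K] (w : K) (n : ℕ) (x : Fin n → K) : K :=
  (∏ i : Fin n, (1 - x i)) *
    (∏ i : Fin n, ∏ j ∈ Finset.univ.filter (fun j => i < j), (1 - x i * x j)) *
    Ffun w n x

section
open Finset Polynomial

namespace Stmt15Aux

open Finset Polynomial

/-! ### Facts about `KK` -/

lemma kk_inj : Function.Injective (algebraMap (MvPolynomial ℕ ℚ) KK) :=
  IsFractionRing.injective _ _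

lemma prod_xx_ne_one {α : Type*} (T : Finset α) (g : α → ℕ) (hT : T.Nonempty) :
    (∏ k ∈ T, xx (g k)) ≠ 1 := by
  intro h
  have h1 : (∏ k ∈ T, MvPolynomial.X (R := ℚ) (g k)) = 1 := by
    apply kk_inj
    rw [map_prod, map_one]
    simpa [xx] using h
  have h0 := congrArg (MvPolynomial.eval (fun _ => (0 : ℚ))) h1
  rw [map_prod, map_one] at h0
  obtain ⟨a, ha⟩ := hT
  rw [Finset.prod_eq_zero ha (by simp)] at h0
  exact zero_ne_one h0

lemma xx_ne_one (i : ℕ) : xx i ≠ 1 := by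
  simpa using prod_xx_ne_one {0} (fun _ => i) ⟨0, by simp⟩

lemma xx_ne_xx {i j : ℕ} (h : i ≠ j) : xx i ≠ xx j := by
  intro hx
  have h1 : (MvPolynomial.X (R := ℚ) i) = MvPolynomial.X j := kk_inj hx
  have h0 := congrArg (MvPolynomial.eval (fun k => if k = i then (1 : ℚ) else 0)) h1
  simp [h.symm] at h0

end Stmt15Aux
open Finset Polynomial
namespace Stmt15Aux

variable {p : ℕ}

/-! ### Fin index lemmas -/

lemma filter_lt_last :
    (univ.filter (fun j => Fin.last (p+1) < j) : Finset (Fin (p+2))) = ∅ := by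
  ext j; simp [Finset.mem_filter, not_lt.mpr (Fin.le_last j)]

lemma filter_last_le :
    (univ.filter (fun j => Fin.last (p+1) ≤ j) : Finset (Fin (p+2))) = {Fin.last (p+1)} := by
  ext j; simp [Finset.mem_filter, Fin.last_le_iff, eq_comm]

lemma filter_castSucc_lt (i : Fin (p+1)) :
    (univ.filter (fun j => i.castSucc < j) : Finset (Fin (p+2))) =
      insert (Fin.last (p+1)) ((univ.filter (fun j => i < j)).image Fin.castSucc) := by
  ext j
  induction j using Fin.lastCases with
  | last => simp [Fin.castSucc_lt_last]
  | cast j =>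
    simp [Finset.mem_insert, Finset.mem_image, Fin.castSucc_lt_castSucc_iff,
      (Fin.castSucc_lt_last j).ne, Fin.castSucc_inj]

lemma filter_castSucc_le (i : Fin (p+1)) :
    (univ.filter (fun j => i.castSucc ≤ j) : Finset (Fin (p+2))) =
      insert (Fin.last (p+1)) ((univ.filter (fun j => i ≤ j)).image Fin.castSucc) := by
  ext j
  induction j using Fin.lastCases with
  | last => simp [Fin.le_last]
  | cast j =>
    simp [Finset.mem_insert, Finset.mem_image, Fin.castSucc_le_castSucc_iff,
      (Fin.castSucc_lt_last j).ne, Fin.castSucc_inj]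

lemma last_not_mem_image {s : Finset (Fin (p+1))} :
    Fin.last (p+1) ∉ s.image Fin.castSucc := by
  simp only [Finset.mem_image, not_exists]
  intro a
  simp [(Fin.castSucc_lt_last a).ne]

lemma erase_last_eq :
    (univ : Finset (Fin (p+2))).erase (Fin.last (p+1)) = univ.image Fin.castSucc := by
  ext j
  simp [Finset.mem_erase, ← Fin.exists_castSucc_eq, eq_comm]

lemma prod_erase_last {M : Type*} [CommMonoid M] (f : Fin (p+2) → M) :
    ∏ i ∈ (univ : Finset (Fin (p+2))).erase (Fin.last (p+1)), f i
      = ∏ i : Fin (p+1), f i.castSucc := by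
  rw [erase_last_eq, Finset.prod_image (fun a _ b _ h => Fin.castSucc_inj.mp h)]

lemma prod_pairs {M : Type*} [CommMonoid M] (g : Fin (p+2) → Fin (p+2) → M) :
    (∏ i : Fin (p+2), ∏ j ∈ univ.filter (fun j => i < j), g i j)
      = (∏ i : Fin (p+1), ∏ j ∈ univ.filter (fun j => i < j), g i.castSucc j.castSucc)
        * ∏ i : Fin (p+1), g i.castSucc (Fin.last (p+1)) := by
  rw [Fin.prod_univ_castSucc, filter_lt_last, Finset.prod_empty, mul_one,
    ← Finset.prod_mul_distrib]
  refine Finset.prod_congr rfl fun i _ => ?_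
  rw [filter_castSucc_lt, Finset.prod_insert last_not_mem_image,
    Finset.prod_image (fun a _ b _ h => Fin.castSucc_inj.mp h), mul_comm]

lemma prod_tail_split {M : Type*} [CommMonoid M] (i : Fin (p+1)) (h : Fin (p+2) → M) :
    (∏ j ∈ univ.filter (fun j => i.castSucc ≤ j), h j)
      = (∏ j ∈ univ.filter (fun j => i ≤ j), h j.castSucc) * h (Fin.last (p+1)) := by
  rw [filter_castSucc_le, Finset.prod_insert last_not_mem_image,
    Finset.prod_image (fun a _ b _ h => Fin.castSucc_inj.mp h), mul_comm]

end Stmt15Aux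
open Finset Polynomial
namespace Stmt15Aux

variable {p : ℕ}

/-! ### The polynomials `Y` and their values at 1 -/

def Y (p : ℕ) (i : Fin (p+2)) : Polynomial KK :=
  if i = Fin.last (p+1) then Polynomial.X else Polynomial.C (xx ((i : ℕ)+1))

lemma Y_last : Y p (Fin.last (p+1)) = Polynomial.X := if_pos rfl

lemma Y_castSucc (i : Fin (p+1)) : Y p i.castSucc = Polynomial.C (xx ((i : ℕ)+1)) := by
  rw [Y, if_neg (Fin.castSucc_lt_last i).ne, Fin.coe_castSucc]

def yv (p : ℕ) (i : Fin (p+2)) : KK :=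
  if i = Fin.last (p+1) then 1 else xx ((i : ℕ)+1)

lemma yv_last : yv p (Fin.last (p+1)) = 1 := if_pos rfl

lemma yv_castSucc (i : Fin (p+1)) : yv p i.castSucc = xx ((i : ℕ)+1) := by
  rw [yv, if_neg (Fin.castSucc_lt_last i).ne, Fin.coe_castSucc]

lemma Y_eval (i : Fin (p+2)) : (Y p i).eval 1 = yv p i := by
  rw [Y, yv]; split <;> simp

lemma snoc_eq :
    (Fin.snoc (fun i : Fin (p+1) => RatFunc.C (xx ((i : ℕ) + 1))) RatFunc.X : Fin (p+2) → RatFunc KK)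
      = fun i => algebraMap (Polynomial KK) (RatFunc KK) (Y p i) := by
  funext i
  induction i using Fin.lastCases with
  | last => rw [Y_last, Fin.snoc_last, RatFunc.algebraMap_X]
  | cast i => rw [Y_castSucc, Fin.snoc_castSucc, RatFunc.algebraMap_C]

/-! ### Evaluating fractions of polynomials in `RatFunc` -/

lemma denom_eval_ne_zero (P Q : Polynomial KK) (hQ : Q.eval 1 ≠ 0) :
    ((algebraMap (Polynomial KK) (RatFunc KK) P / algebraMap _ _ Q).denom).eval 1 ≠ 0 := by
  have hQ0 : Q ≠ 0 := fun h => hQ (by simp [h])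
  have hdvd : (algebraMap (Polynomial KK) (RatFunc KK) P / algebraMap _ _ Q).denom ∣ Q :=
    (RatFunc.denom_dvd hQ0).mpr ⟨P, rfl⟩
  obtain ⟨c, hc⟩ := hdvd
  intro h
  rw [hc, Polynomial.eval_mul, h, zero_mul] at hQ
  exact hQ rfl

lemma eval₂_id_eq (q : Polynomial KK) (a : KK) :
    Polynomial.eval₂ (RingHom.id KK) a q = q.eval a := rfl

lemma eval_div_poly (P Q : Polynomial KK) (hQ : Q.eval 1 ≠ 0) :
    RatFunc.eval (RingHom.id KK) 1 (algebraMap (Polynomial KK) (RatFunc KK) P / algebraMap _ _ Q)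
      = P.eval 1 / Q.eval 1 := by
  have hQ0 : Q ≠ 0 := fun h => hQ (by simp [h])
  set f := algebraMap (Polynomial KK) (RatFunc KK) P / algebraMap _ _ Q with hf
  have hden0 : f.denom.eval 1 ≠ 0 := denom_eval_ne_zero P Q hQ
  have key : P * f.denom = Q * f.num := by
    apply RatFunc.algebraMap_injective
    rw [map_mul, map_mul]
    have h1 : algebraMap (Polynomial KK) (RatFunc KK) f.num / algebraMap _ _ f.denom = f :=
      RatFunc.num_div_denom f
    have hQ' : algebraMap (Polynomial KK) (RatFunc KK) Q ≠ 0 := RatFunc.algebraMap_ne_zero hQ0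
    have hd' : algebraMap (Polynomial KK) (RatFunc KK) f.denom ≠ 0 :=
      RatFunc.algebraMap_ne_zero f.denom_ne_zero
    have h2 : algebraMap (Polynomial KK) (RatFunc KK) P / algebraMap _ _ Q
        = algebraMap (Polynomial KK) (RatFunc KK) f.num / algebraMap _ _ f.denom := by
      rw [h1, hf]
    rw [div_eq_div_iff hQ' hd'] at h2
    rw [mul_comm (algebraMap (Polynomial KK) (RatFunc KK) Q) _, ← h2]
  have keyv : P.eval 1 * f.denom.eval 1 = Q.eval 1 * f.num.eval 1 := by
    have := congrArg (Polynomial.eval (1 : KK)) key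
    simpa [Polynomial.eval_mul] using this
  rw [RatFunc.eval, eval₂_id_eq, eval₂_id_eq]
  rw [div_eq_div_iff hden0 hQ]
  rw [mul_comm (f.num.eval 1) _, ← keyv, mul_comm]

lemma sum_div_rep {α : Type*} (s : Finset α) (N D : α → Polynomial KK)
    (hD : ∀ i ∈ s, D i ≠ 0) :
    ∃ P : Polynomial KK,
      (∑ i ∈ s, algebraMap (Polynomial KK) (RatFunc KK) (N i) / algebraMap _ _ (D i))
        = algebraMap (Polynomial KK) (RatFunc KK) P / algebraMap _ _ (∏ i ∈ s, D i) := by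
  classical
  induction s using Finset.induction with
  | empty => exact ⟨0, by simp⟩
  | @insert a t ha ih =>
    obtain ⟨P, hP⟩ := ih (fun i hi => hD i (Finset.mem_insert_of_mem hi))
    have hDa : algebraMap (Polynomial KK) (RatFunc KK) (D a) ≠ 0 :=
      RatFunc.algebraMap_ne_zero (hD a (Finset.mem_insert_self a t))
    have hDt : algebraMap (Polynomial KK) (RatFunc KK) (∏ i ∈ t, D i) ≠ 0 :=
      RatFunc.algebraMap_ne_zero (Finset.prod_ne_zero_iff.mpr
        (fun i hi => hD i (Finset.mem_insert_of_mem hi)))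
    refine ⟨N a * ∏ i ∈ t, D i + P * D a, ?_⟩
    rw [Finset.sum_insert ha, hP, Finset.prod_insert ha,
      div_add_div _ _ hDa hDt, map_mul, map_add, map_mul, map_mul]
    ring

lemma eval_sum_div {α : Type*} (s : Finset α) (N D : α → Polynomial KK)
    (hD : ∀ i ∈ s, (D i).eval 1 ≠ 0) :
    RatFunc.eval (RingHom.id KK) 1
        (∑ i ∈ s, algebraMap (Polynomial KK) (RatFunc KK) (N i) / algebraMap _ _ (D i))
      = ∑ i ∈ s, (N i).eval 1 / (D i).eval 1 := by
  classical
  induction s using Finset.induction with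
  | empty => simp
  | @insert a t ha ih =>
    have hDt : ∀ i ∈ t, (D i).eval 1 ≠ 0 := fun i hi => hD i (Finset.mem_insert_of_mem hi)
    have hDa := hD a (Finset.mem_insert_self a t)
    obtain ⟨P, hP⟩ := sum_div_rep t N D
      (fun i hi => fun h => hDt i hi (by simp [h]))
    have hprod : (∏ i ∈ t, D i).eval 1 ≠ 0 := by
      rw [Polynomial.eval_prod]
      exact Finset.prod_ne_zero_iff.mpr hDt
    rw [Finset.sum_insert ha, RatFunc.eval_add, ih hDt, Finset.sum_insert ha,
      eval_div_poly _ _ hDa]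
    · rw [eval₂_id_eq]; exact denom_eval_ne_zero _ _ hDa
    · rw [eval₂_id_eq, hP]; exact denom_eval_ne_zero _ _ hprod

end Stmt15Aux
section
open Finset Polynomial
namespace Stmt15Aux
variable {p : ℕ}

def Npoly (p : ℕ) (σ : Equiv.Perm (Fin (p+2))) : Polynomial KK :=
  ((Equiv.Perm.sign σ : ℤ) : Polynomial KK) *
  (∏ i ∈ (univ : Finset (Fin (p+2))).erase (σ (Fin.last (p+1))), (1 - Y p i)) *
  (∏ i : Fin (p+2), ∏ j ∈ univ.filter (fun j => i < j), (1 - Y p i * Y p j)) *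
  (∏ i : Fin (p+2), ∏ j ∈ univ.filter (fun j => i < j),
    (Y p (σ i) * Y p (σ j) + 1 + Polynomial.C ww * Y p (σ i))) *
  (∏ i : Fin (p+2), Y p (σ i) ^ (i : ℕ))

def Dpoly (p : ℕ) (σ : Equiv.Perm (Fin (p+2))) : Polynomial KK :=
  (∏ i : Fin (p+2), ∏ j ∈ univ.filter (fun j => i < j), (Y p j - Y p i)) *
  (∏ i : Fin (p+1), (1 - ∏ j ∈ univ.filter (fun j => i.castSucc ≤ j), Y p (σ j)))

lemma delta_eval_ne_zero :
    (∏ i : Fin (p+2), ∏ j ∈ univ.filter (fun j => i < j), (yv p j - yv p i)) ≠ 0 := by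
  rw [Finset.prod_ne_zero_iff]
  intro i _
  rw [Finset.prod_ne_zero_iff]
  intro j hj
  rw [Finset.mem_filter] at hj
  have hij : i < j := hj.2
  have hi : i ≠ Fin.last (p+1) := (lt_of_lt_of_le hij (Fin.le_last j)).ne
  obtain ⟨i', rfl⟩ := Fin.exists_castSucc_eq.mpr hi
  induction j using Fin.lastCases with
  | last =>
    rw [yv_last, yv_castSucc]
    exact sub_ne_zero.mpr (Ne.symm (xx_ne_one _))
  | cast j' =>
    rw [yv_castSucc, yv_castSucc]
    refine sub_ne_zero.mpr (xx_ne_xx ?_)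
    have h2 : (i' : ℕ) < (j' : ℕ) := Fin.castSucc_lt_castSucc_iff.mp hij
    omega

lemma tail_eval_ne_zero (σ : Equiv.Perm (Fin (p+2))) (i : Fin (p+1)) :
    (1 - ∏ j ∈ univ.filter (fun j => i.castSucc ≤ j), yv p (σ j)) ≠ 0 := by
  set S : Finset (Fin (p+2)) := univ.filter (fun j => i.castSucc ≤ j) with hS
  have h1 : (∏ j ∈ S, yv p (σ j)) = ∏ k ∈ S.image σ, yv p k :=
    (Finset.prod_image (fun a _ b _ h => σ.injective h)).symm
  set U := S.image σ with hU
  set T := U.erase (Fin.last (p+1)) with hT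
  have hcard : 1 < U.card := by
    rw [hU, Finset.card_image_of_injective _ σ.injective]
    refine Finset.one_lt_card.mpr ⟨i.castSucc, ?_, Fin.last (p+1), ?_, (Fin.castSucc_lt_last i).ne⟩
    · simp [hS]
    · simp [hS, Fin.le_last]
  have hTne : T.Nonempty := by
    obtain ⟨a, ha, b, hb, hab⟩ := Finset.one_lt_card.mp hcard
    by_cases hal : a = Fin.last (p+1)
    · exact ⟨b, Finset.mem_erase.mpr ⟨fun h => hab (hal.trans h.symm), hb⟩⟩
    · exact ⟨a, Finset.mem_erase.mpr ⟨hal, ha⟩⟩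
  have h2 : (∏ k ∈ U, yv p k) = ∏ k ∈ T, yv p k := by
    by_cases hl : Fin.last (p+1) ∈ U
    · rw [← Finset.mul_prod_erase U _ hl, yv_last, one_mul, hT]
    · rw [hT, Finset.erase_eq_of_notMem hl]
  have h3 : (∏ k ∈ T, yv p k) = ∏ k ∈ T, xx ((k : ℕ)+1) :=
    Finset.prod_congr rfl fun k hk => by rw [yv, if_neg (Finset.mem_erase.mp hk).1]
  rw [h1, h2, h3]
  exact sub_ne_zero.mpr (Ne.symm (prod_xx_ne_one T (fun k => (k : ℕ)+1) hTne))

lemma Dpoly_eval_ne_zero (σ : Equiv.Perm (Fin (p+2))) : (Dpoly p σ).eval 1 ≠ 0 := by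
  rw [Dpoly]
  simp only [Polynomial.eval_mul, Polynomial.eval_prod, Polynomial.eval_sub,
    Polynomial.eval_one, Y_eval]
  exact mul_ne_zero delta_eval_ne_zero
    (Finset.prod_ne_zero_iff.mpr fun i _ => tail_eval_ne_zero σ i)

lemma Npoly_eval_vanish (σ : Equiv.Perm (Fin (p+2))) (h : σ (Fin.last (p+1)) ≠ Fin.last (p+1)) :
    (Npoly p σ).eval 1 = 0 := by
  rw [Npoly]
  simp only [Polynomial.eval_mul]
  have : (∏ i ∈ (univ : Finset (Fin (p+2))).erase (σ (Fin.last (p+1))), (1 - Y p i)).eval 1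
      = 0 := by
    rw [Polynomial.eval_prod]
    refine Finset.prod_eq_zero (Finset.mem_erase.mpr ⟨Ne.symm h, Finset.mem_univ _⟩) ?_
    simp [Y_eval, yv_last]
  rw [this]
  ring
end Stmt15Aux
end
open Finset Polynomial
namespace Stmt15Aux
variable {p : ℕ}

lemma aux_field {F : Type*} [Field F] (u P1 P2 s A Pw Q D : F) (hu : 1 - u ≠ 0) :
    (((1 - u) * P1) * P2) * ((s * (A * (Pw * (Q * (1 - u))⁻¹))) * D⁻¹)
      = ((((s * P1) * P2) * A) * Pw) / (D * Q) := by
  rw [div_eq_mul_inv, mul_inv, mul_inv]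
  linear_combination (P1 * P2 * s * A * Pw * Q⁻¹ * D⁻¹) * (mul_inv_cancel₀ hu)

lemma one_sub_Y_ne_zero (k : Fin (p+2)) : (1 : Polynomial KK) - Y p k ≠ 0 := by
  refine sub_ne_zero.mpr (Ne.symm ?_)
  induction k using Fin.lastCases with
  | last =>
    rw [Y_last]
    intro h
    have := congrArg Polynomial.natDegree h
    simp at this
  | cast k =>
    rw [Y_castSucc]
    intro h
    exact xx_ne_one _ (Polynomial.C_injective (by simpa using h))

lemma FtildeLHS_rep (p : ℕ) :
    Ftilde (RatFunc.C ww) (p+2) (fun i => algebraMap (Polynomial KK) (RatFunc KK) (Y p i))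
      = ∑ σ : Equiv.Perm (Fin (p+2)),
          algebraMap (Polynomial KK) (RatFunc KK) (Npoly p σ)
            / algebraMap (Polynomial KK) (RatFunc KK) (Dpoly p σ) := by
  rw [Ftilde, Ffun, div_eq_mul_inv, Finset.sum_mul, Finset.mul_sum]
  refine Finset.sum_congr rfl fun σ _ => ?_
  set f := algebraMap (Polynomial KK) (RatFunc KK) with hf
  -- nonzeroness facts
  have hD0 : Dpoly p σ ≠ 0 := fun h => Dpoly_eval_ne_zero σ (by rw [h]; simp)
  rw [Dpoly] at hD0
  obtain ⟨hΔp, hQp⟩ := mul_ne_zero_iff.mp hD0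
  have hΔ : f (∏ i : Fin (p+2), ∏ j ∈ univ.filter (fun j => i < j), (Y p j - Y p i)) ≠ 0 :=
    RatFunc.algebraMap_ne_zero hΔp
  have hQ : f (∏ i : Fin (p+1),
      (1 - ∏ j ∈ univ.filter (fun j => i.castSucc ≤ j), Y p (σ j))) ≠ 0 :=
    RatFunc.algebraMap_ne_zero hQp
  have hu : (1 : RatFunc KK) - f (Y p (σ (Fin.last (p+1)))) ≠ 0 := by
    rw [show (1 : RatFunc KK) - f (Y p (σ (Fin.last (p+1))))
        = f (1 - Y p (σ (Fin.last (p+1)))) by rw [map_sub, map_one]]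
    exact RatFunc.algebraMap_ne_zero (one_sub_Y_ne_zero _)
  -- structural rewrites
  have hprodmul : (∏ i : Fin (p+2), (f (Y p (σ i)) ^ (i : ℕ) *
        (1 - ∏ j ∈ univ.filter (fun j => i ≤ j), f (Y p (σ j)))⁻¹))
      = (∏ i : Fin (p+2), f (Y p (σ i)) ^ (i : ℕ)) *
        (∏ i : Fin (p+2), (1 - ∏ j ∈ univ.filter (fun j => i ≤ j), f (Y p (σ j))))⁻¹ := by
    rw [Finset.prod_mul_distrib, Finset.prod_inv_distrib]
  have hsplit : (∏ i : Fin (p+2), (1 - ∏ j ∈ univ.filter (fun j => i ≤ j), f (Y p (σ j))))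
      = (∏ i : Fin (p+1),
          (1 - ∏ j ∈ univ.filter (fun j => i.castSucc ≤ j), f (Y p (σ j)))) *
        (1 - f (Y p (σ (Fin.last (p+1))))) := by
    rw [Fin.prod_univ_castSucc, filter_last_le, Finset.prod_singleton]
  have hP1 : (∏ i : Fin (p+2), (1 - f (Y p i)))
      = (1 - f (Y p (σ (Fin.last (p+1))))) *
        ∏ i ∈ (univ : Finset (Fin (p+2))).erase (σ (Fin.last (p+1))), (1 - f (Y p i)) :=
    (Finset.mul_prod_erase _ _ (Finset.mem_univ _)).symm
  rw [hprodmul, hsplit, hP1]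
  simp only [Npoly, Dpoly, map_mul, map_prod, map_sub, map_add, map_pow, map_one,
    map_intCast, RatFunc.algebraMap_C]
  exact aux_field _ _ _ _ _ _ _ _ hu

end Stmt15Aux
open Finset Polynomial
namespace Stmt15Aux
variable {p : ℕ}

def EE (p : ℕ) (τ : Equiv.Perm (Fin (p+1))) : Equiv.Perm (Fin (p+2)) :=
  τ.extendDomain (finSuccAboveEquiv (Fin.last (p+1)))

lemma EE_last (τ : Equiv.Perm (Fin (p+1))) : EE p τ (Fin.last (p+1)) = Fin.last (p+1) :=
  Equiv.Perm.extendDomain_apply_not_subtype _ _ (by simp)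

lemma EE_castSucc (τ : Equiv.Perm (Fin (p+1))) (i : Fin (p+1)) :
    EE p τ i.castSucc = (τ i).castSucc := by
  have h : i.castSucc ≠ Fin.last (p+1) := (Fin.castSucc_lt_last i).ne
  rw [EE, τ.extendDomain_apply_subtype (finSuccAboveEquiv (Fin.last (p+1))) (b := i.castSucc) h]
  have h1 : (finSuccAboveEquiv (Fin.last (p+1))).symm ⟨i.castSucc, h⟩ = i := by
    rw [finSuccAboveEquiv_symm_apply_last]
    exact Fin.ext (by simp)
  rw [h1, finSuccAboveEquiv_apply]
  simp [Fin.succAbove_last]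

lemma sign_EE (τ : Equiv.Perm (Fin (p+1))) : Equiv.Perm.sign (EE p τ) = Equiv.Perm.sign τ :=
  Equiv.Perm.sign_extendDomain τ _

def Res (σ : Equiv.Perm (Fin (p+2))) (hσ : σ (Fin.last (p+1)) = Fin.last (p+1)) :
    Equiv.Perm (Fin (p+1)) :=
  (finSuccAboveEquiv (Fin.last (p+1))).symm.permCongr
    (σ.subtypePerm (by
      intro x
      constructor
      · intro hx h2
        exact hx (by rw [h2, hσ])
      · intro hx h2
        exact hx (σ.injective (h2.trans hσ.symm))))

lemma Res_castSucc (σ : Equiv.Perm (Fin (p+2))) (hσ : σ (Fin.last (p+1)) = Fin.last (p+1))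
    (i : Fin (p+1)) : (Res σ hσ i).castSucc = σ i.castSucc := by
  apply Fin.ext
  simp [Res, Equiv.permCongr_apply, finSuccAboveEquiv_symm_apply_last, finSuccAboveEquiv_apply,
    Fin.succAbove_last, Equiv.Perm.subtypePerm_apply]

lemma EE_Res (σ : Equiv.Perm (Fin (p+2))) (hσ : σ (Fin.last (p+1)) = Fin.last (p+1)) :
    EE p (Res σ hσ) = σ := by
  apply Equiv.ext
  intro x
  induction x using Fin.lastCases with
  | last => rw [EE_last, hσ]
  | cast i => rw [EE_castSucc, Res_castSucc]

lemma Res_EE (τ : Equiv.Perm (Fin (p+1))) (h : EE p τ (Fin.last (p+1)) = Fin.last (p+1)) :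
    Res (EE p τ) h = τ := by
  apply Equiv.ext
  intro i
  apply Fin.castSucc_injective
  rw [Res_castSucc, EE_castSucc]

lemma sum_fix_last {M : Type*} [AddCommMonoid M] (v : Equiv.Perm (Fin (p+2)) → M)
    (hvanish : ∀ σ : Equiv.Perm (Fin (p+2)), σ (Fin.last (p+1)) ≠ Fin.last (p+1) → v σ = 0) :
    (∑ σ : Equiv.Perm (Fin (p+2)), v σ) = ∑ τ : Equiv.Perm (Fin (p+1)), v (EE p τ) := by
  classical
  rw [← Finset.sum_filter_of_ne (p := fun σ => σ (Fin.last (p+1)) = Fin.last (p+1))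
    (fun σ _ hv => by by_contra h; exact hv (hvanish σ h))]
  refine Finset.sum_bij' (fun σ hσ => Res σ ((Finset.mem_filter.mp hσ).2))
    (fun τ _ => EE p τ) (fun σ hσ => Finset.mem_univ _) ?_ ?_ ?_ ?_
  · intro τ _
    simp [EE_last]
  · intro σ hσ
    exact EE_Res σ _
  · intro τ _
    exact Res_EE τ _
  · intro σ hσ
    rw [EE_Res]

end Stmt15Aux
open Finset Polynomial
namespace Stmt15Aux
variable {p : ℕ}

lemma aux_field2 {F : Type*} [Field F] (s a1 a2 a3 a4 a5 a6 a7 : F)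
    (h1 : a1 ≠ 0) (h6 : a6 ≠ 0) (h7 : a7 ≠ 0) :
    ((((s * a1) * (a2 * a1)) * (a3 * a4)) * a5) / ((a6 * a1) * a7)
      = a4 * ((a1 * a2) * ((s * (a3 * (a5 * a7⁻¹))) * a6⁻¹)) := by
  field_simp

lemma a1_ne_zero : (∏ i : Fin (p+1), (1 - xx ((i : ℕ)+1))) ≠ 0 :=
  Finset.prod_ne_zero_iff.mpr fun _ _ => sub_ne_zero.mpr (Ne.symm (xx_ne_one _))

lemma a6_ne_zero :
    (∏ i : Fin (p+1), ∏ j ∈ univ.filter (fun j => i < j), (xx ((j : ℕ)+1) - xx ((i : ℕ)+1)))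
      ≠ 0 := by
  rw [Finset.prod_ne_zero_iff]
  intro i _
  rw [Finset.prod_ne_zero_iff]
  intro j hj
  rw [Finset.mem_filter] at hj
  have hij : (i : ℕ) < (j : ℕ) := hj.2
  exact sub_ne_zero.mpr (xx_ne_xx (by omega))

lemma a7_ne_zero (τ : Equiv.Perm (Fin (p+1))) :
    (∏ i : Fin (p+1), (1 - ∏ j ∈ univ.filter (fun j => i ≤ j), xx ((τ j : ℕ)+1))) ≠ 0 := by
  rw [Finset.prod_ne_zero_iff]
  intro i _
  refine sub_ne_zero.mpr (Ne.symm (prod_xx_ne_one _ _ ⟨i, ?_⟩))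
  simp

lemma term_eval (τ : Equiv.Perm (Fin (p+1))) :
    (Npoly p (EE p τ)).eval 1 / (Dpoly p (EE p τ)).eval 1
      = (∏ k : Fin (p+1), (1 + xx ((k : ℕ)+1) + ww * xx ((k : ℕ)+1))) *
        ((∏ i : Fin (p+1), (1 - xx ((i : ℕ)+1))) *
          (∏ i : Fin (p+1), ∏ j ∈ univ.filter (fun j => i < j),
            (1 - xx ((i : ℕ)+1) * xx ((j : ℕ)+1))) *
          (((Equiv.Perm.sign τ : ℤ) : KK) *
            ((∏ i : Fin (p+1), ∏ j ∈ univ.filter (fun j => i < j),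
                (xx ((τ i : ℕ)+1) * xx ((τ j : ℕ)+1) + 1 + ww * xx ((τ i : ℕ)+1))) *
              ∏ i : Fin (p+1), (xx ((τ i : ℕ)+1) ^ (i : ℕ) *
                (1 - ∏ j ∈ univ.filter (fun j => i ≤ j), xx ((τ j : ℕ)+1))⁻¹)) *
            (∏ i : Fin (p+1), ∏ j ∈ univ.filter (fun j => i < j),
              (xx ((j : ℕ)+1) - xx ((i : ℕ)+1)))⁻¹)) := by
  have hE : (∏ i ∈ (univ : Finset (Fin (p+2))).erase (EE p τ (Fin.last (p+1))), (1 - yv p i))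
      = ∏ i : Fin (p+1), (1 - xx ((i : ℕ)+1)) := by
    rw [EE_last, prod_erase_last]
    exact Finset.prod_congr rfl fun i _ => by rw [yv_castSucc]
  have hP2 : (∏ i : Fin (p+2), ∏ j ∈ univ.filter (fun j => i < j), (1 - yv p i * yv p j))
      = (∏ i : Fin (p+1), ∏ j ∈ univ.filter (fun j => i < j),
          (1 - xx ((i : ℕ)+1) * xx ((j : ℕ)+1))) * ∏ i : Fin (p+1), (1 - xx ((i : ℕ)+1)) := by
    rw [prod_pairs]
    congr 1
    · exact Finset.prod_congr rfl fun i _ => Finset.prod_congr rfl fun j _ => by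
        rw [yv_castSucc, yv_castSucc]
    · exact Finset.prod_congr rfl fun i _ => by rw [yv_castSucc, yv_last, mul_one]
  have hA : (∏ i : Fin (p+2), ∏ j ∈ univ.filter (fun j => i < j),
        (yv p (EE p τ i) * yv p (EE p τ j) + 1 + ww * yv p (EE p τ i)))
      = (∏ i : Fin (p+1), ∏ j ∈ univ.filter (fun j => i < j),
          (xx ((τ i : ℕ)+1) * xx ((τ j : ℕ)+1) + 1 + ww * xx ((τ i : ℕ)+1))) *
        ∏ k : Fin (p+1), (1 + xx ((k : ℕ)+1) + ww * xx ((k : ℕ)+1)) := by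
    rw [prod_pairs]
    congr 1
    · exact Finset.prod_congr rfl fun i _ => Finset.prod_congr rfl fun j _ => by
        rw [EE_castSucc, EE_castSucc, yv_castSucc, yv_castSucc]
    · rw [← Equiv.prod_comp τ (fun k => 1 + xx ((k : ℕ)+1) + ww * xx ((k : ℕ)+1))]
      refine Finset.prod_congr rfl fun i _ => ?_
      rw [EE_castSucc, EE_last, yv_castSucc, yv_last]
      ring
  have hPw : (∏ i : Fin (p+2), yv p (EE p τ i) ^ (i : ℕ))
      = ∏ i : Fin (p+1), xx ((τ i : ℕ)+1) ^ (i : ℕ) := by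
    rw [Fin.prod_univ_castSucc, EE_last, yv_last, one_pow, mul_one]
    exact Finset.prod_congr rfl fun i _ => by
      rw [EE_castSucc, yv_castSucc, Fin.coe_castSucc]
  have hDel : (∏ i : Fin (p+2), ∏ j ∈ univ.filter (fun j => i < j), (yv p j - yv p i))
      = (∏ i : Fin (p+1), ∏ j ∈ univ.filter (fun j => i < j),
          (xx ((j : ℕ)+1) - xx ((i : ℕ)+1))) * ∏ i : Fin (p+1), (1 - xx ((i : ℕ)+1)) := by
    rw [prod_pairs]
    congr 1
    · exact Finset.prod_congr rfl fun i _ => Finset.prod_congr rfl fun j _ => by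
        rw [yv_castSucc, yv_castSucc]
    · exact Finset.prod_congr rfl fun i _ => by rw [yv_castSucc, yv_last]
  have hT : (∏ i : Fin (p+1),
        (1 - ∏ j ∈ univ.filter (fun j => i.castSucc ≤ j), yv p (EE p τ j)))
      = ∏ i : Fin (p+1), (1 - ∏ j ∈ univ.filter (fun j => i ≤ j), xx ((τ j : ℕ)+1)) := by
    refine Finset.prod_congr rfl fun i _ => ?_
    rw [prod_tail_split, EE_last, yv_last, mul_one]
    congr 1
    exact Finset.prod_congr rfl fun j _ => by rw [EE_castSucc, yv_castSucc]
  rw [Npoly, Dpoly]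
  simp only [Polynomial.eval_mul, Polynomial.eval_prod, Polynomial.eval_sub,
    Polynomial.eval_add, Polynomial.eval_one, Polynomial.eval_pow, Polynomial.eval_intCast,
    Polynomial.eval_C, Y_eval]
  rw [sign_EE, hE, hP2, hA, hPw, hDel, hT]
  rw [Finset.prod_mul_distrib, Finset.prod_inv_distrib]
  exact aux_field2 _ _ _ _ _ _ _ _ a1_ne_zero a6_ne_zero (a7_ne_zero τ)

end Stmt15Aux
open Finset Polynomial


/-- For `n = p+2 > 1`:
`F̃(x_1,…,x_n)|_{x_n = 1} = ∏_{k=1}^{n-1} (1 + x_k + w x_k) · F̃(x_1,…,x_{n-1})`.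
The left-hand side is computed by regarding `F̃(x_1,…,x_{n-1}, T)` as a univariate
rational function in `T` over `ℚ(w,x_1,…,x_{n-1})` (the variable `T = RatFunc.X`
plays the role of `x_n`) and evaluating it at `T = 1`; since `F̃` is regular there,
`RatFunc.eval` returns the genuine value. -/
theorem stmt15 (p : ℕ) :
    RatFunc.eval (RingHom.id KK) 1
      (Ftilde (RatFunc.C ww) (p + 2)
        (Fin.snoc (fun i : Fin (p + 1) => RatFunc.C (xx ((i : ℕ) + 1))) RatFunc.X))
    = (∏ k : Fin (p + 1), (1 + xx ((k : ℕ) + 1) + ww * xx ((k : ℕ) + 1))) *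
        Ftilde ww (p + 1) (fun i => xx ((i : ℕ) + 1)) := by
  rw [Stmt15Aux.snoc_eq, Stmt15Aux.FtildeLHS_rep p,
    Stmt15Aux.eval_sum_div univ (Stmt15Aux.Npoly p) (Stmt15Aux.Dpoly p)
      (fun σ _ => Stmt15Aux.Dpoly_eval_ne_zero σ),
    Stmt15Aux.sum_fix_last _ (fun σ h => by rw [Stmt15Aux.Npoly_eval_vanish σ h, zero_div])]
  rw [Ftilde, Ffun, div_eq_mul_inv, Finset.sum_mul, Finset.mul_sum, Finset.mul_sum]
  exact Finset.sum_congr rfl fun τ _ => (Stmt15Aux.term_eval τ).trans (by ring)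


end
end
end
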